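/- arXiv:2101.05251 — 4 statements merged into one kernel-verified Lean document; each statement's English description precedes it below -/
import Mathlib

section
/- Let (Ω, μ) be a measure space with μ(Ω) < ∞ and (E_i) a sequence of μ-measurable subsets with ∑_{i=1}^∞ μ(E_i) = ∞. Then μ(limsup E_i) ≥ limsup_{n→∞} (∑_{i=1}^n μ(E_i))² / (∑_{i,j=1}^n μ(E_i ∩ E_j)). -/
open MeasureTheory Filter
open scoped ENNReal Topology

/-- Cauchy–Schwarz step: for any finite family of measurable sets,
`(∑ μ(Eᵢ))² ≤ μ(⋃ Eᵢ) * ∑∑ μ(Eᵢ ∩ Eⱼ)`. -/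
lemma cs_step {Ω : Type*} [MeasurableSpace Ω] (μ : Measure Ω)
    (E : ℕ → Set Ω) (hE : ∀ i, MeasurableSet (E i)) (F : Finset ℕ) :
    (∑ i ∈ F, μ (E i)) ^ 2 ≤ μ (⋃ i ∈ F, E i) * ∑ i ∈ F, ∑ j ∈ F, μ (E i ∩ E j) := by
  classical
  set f : Ω → ℝ≥0∞ := fun ω => ∑ i ∈ F, (E i).indicator 1 ω with hf
  set U : Set Ω := ⋃ i ∈ F, E i with hU
  have hUm : MeasurableSet U := F.measurableSet_biUnion (fun i _ => hE i)
  have hfm : Measurable f :=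
    Finset.measurable_sum _ fun i _ => measurable_one.indicator (hE i)
  have h1 : ∫⁻ ω, f ω ∂μ = ∑ i ∈ F, μ (E i) := by
    rw [hf, lintegral_finset_sum _ fun i _ => measurable_one.indicator (hE i)]
    refine Finset.sum_congr rfl fun i _ => ?_
    rw [lintegral_indicator (hE i)]
    simp
  have h2 : ∫⁻ ω, f ω ^ 2 ∂μ = ∑ i ∈ F, ∑ j ∈ F, μ (E i ∩ E j) := by
    have hpt : ∀ ω, f ω ^ 2 = ∑ i ∈ F, ∑ j ∈ F, (E i ∩ E j).indicator 1 ω := by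
      intro ω
      rw [sq, hf, Finset.sum_mul_sum]
      refine Finset.sum_congr rfl fun i _ => Finset.sum_congr rfl fun j _ => ?_
      by_cases hi : ω ∈ E i <;> by_cases hj : ω ∈ E j <;>
        simp [Set.indicator_apply, hi, hj]
    simp_rw [hpt]
    rw [lintegral_finset_sum _ fun i _ => Finset.measurable_sum _ fun j _ =>
      measurable_one.indicator ((hE i).inter (hE j))]
    refine Finset.sum_congr rfl fun i _ => ?_
    rw [lintegral_finset_sum _ fun j _ => measurable_one.indicator ((hE i).inter (hE j))]
    refine Finset.sum_congr rfl fun j _ => ?_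
    rw [lintegral_indicator ((hE i).inter (hE j))]
    simp
  set g0 : Ω → ℝ≥0∞ := U.indicator 1 with hg0
  -- f vanishes off U
  have hfU : ∀ ω, f ω = f ω * U.indicator 1 ω := by
    intro ω
    by_cases hω : ω ∈ U
    · simp [Set.indicator_of_mem hω]
    · have : f ω = 0 := by
        rw [hf]
        refine Finset.sum_eq_zero fun i hi => ?_
        have : ω ∉ E i := fun h => hω (Set.mem_biUnion hi h)
        simp [Set.indicator_of_notMem this]
      simp [this]
  have hconj : Real.HolderConjugate 2 2 := Real.HolderConjugate.two_two
  have hCS := ENNReal.lintegral_mul_le_Lp_mul_Lq μ hconj hfm.aemeasurable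
    ((measurable_one.indicator hUm).aemeasurable (μ := μ) : AEMeasurable g0 μ)
  have hg2 : ∫⁻ ω, (g0 ω) ^ (2 : ℝ) ∂μ = μ U := by
    have : ∀ ω, (g0 ω) ^ (2 : ℝ) = U.indicator 1 ω := by
      intro ω
      by_cases hω : ω ∈ U <;> simp [hg0, Set.indicator_apply, hω, ENNReal.rpow_two]
    simp_rw [this]
    rw [lintegral_indicator hUm]
    simp
  have hf2 : ∫⁻ ω, f ω ^ (2 : ℝ) ∂μ = ∑ i ∈ F, ∑ j ∈ F, μ (E i ∩ E j) := by
    simp_rw [ENNReal.rpow_two]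
    exact h2
  have key : ∑ i ∈ F, μ (E i) ≤
      (∑ i ∈ F, ∑ j ∈ F, μ (E i ∩ E j)) ^ (1 / 2 : ℝ) * (μ U) ^ (1 / 2 : ℝ) := by
    calc ∑ i ∈ F, μ (E i) = ∫⁻ ω, f ω ∂μ := h1.symm
      _ = ∫⁻ ω, (f * g0) ω ∂μ := by
          refine lintegral_congr fun ω => ?_
          exact hfU ω
      _ ≤ (∫⁻ ω, f ω ^ (2:ℝ) ∂μ) ^ (1/2:ℝ) *
            (∫⁻ ω, (g0 ω) ^ (2:ℝ) ∂μ) ^ (1/2:ℝ) := hCS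
      _ = (∑ i ∈ F, ∑ j ∈ F, μ (E i ∩ E j)) ^ (1/2:ℝ) * (μ U) ^ (1/2:ℝ) := by
          rw [hf2, hg2]
  calc (∑ i ∈ F, μ (E i)) ^ 2
      ≤ ((∑ i ∈ F, ∑ j ∈ F, μ (E i ∩ E j)) ^ (1/2:ℝ) * (μ U) ^ (1/2:ℝ)) ^ 2 := by
        exact pow_le_pow_left₀ zero_le key 2
    _ = μ U * ∑ i ∈ F, ∑ j ∈ F, μ (E i ∩ E j) := by
        rw [mul_pow, ← ENNReal.rpow_two, ← ENNReal.rpow_two,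
          ← ENNReal.rpow_mul, ← ENNReal.rpow_mul]
        norm_num [mul_comm]

/-- Chung–Erdős / Kochen–Stone. If `(Ω,μ)` is a finite measure space and
`(Eᵢ)` are measurable sets with `∑ μ(Eᵢ) = ∞`, then
`μ(limsup Eᵢ) ≥ limsupₙ (∑_{i<n} μ(Eᵢ))² / (∑_{i,j<n} μ(Eᵢ ∩ Eⱼ))`. -/
theorem stmt_1 {Ω : Type*} [MeasurableSpace Ω] (μ : Measure Ω) [IsFiniteMeasure μ]
    (E : ℕ → Set Ω) (hE : ∀ i, MeasurableSet (E i))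
    (hdiv : ∑' i, μ (E i) = ⊤) :
    limsup (fun n =>
        (∑ i ∈ Finset.range n, μ (E i)) ^ 2 /
          ∑ i ∈ Finset.range n, ∑ j ∈ Finset.range n, μ (E i ∩ E j)) atTop ≤
      μ (⋂ j, ⋃ i, ⋃ (_ : j ≤ i), E i) := by
  classical
  set T : ℕ → ℝ≥0∞ := fun n => ∑ i ∈ Finset.range n, μ (E i) with hTdef
  set D : ℕ → ℝ≥0∞ := fun n => ∑ i ∈ Finset.range n, ∑ j ∈ Finset.range n, μ (E i ∩ E j)
    with hDdef
  set U : ℕ → Set Ω := fun m => ⋃ i, ⋃ (_ : m ≤ i), E i with hUdef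
  have hUm : ∀ m, MeasurableSet (U m) := fun m =>
    MeasurableSet.iUnion fun i => MeasurableSet.iUnion fun _ => hE i
  have hUanti : Antitone U := by
    intro a b hab
    exact Set.iUnion₂_mono' fun i hi => ⟨i, hab.trans hi, subset_rfl⟩
  have hInter : μ (⋂ j, U j) = ⨅ j, μ (U j) :=
    Directed.measure_iInter (fun j => (hUm j).nullMeasurableSet)
      (hUanti.directed_ge) ⟨0, measure_ne_top μ _⟩
  rw [show (⋂ j, ⋃ i, ⋃ (_ : j ≤ i), E i) = ⋂ j, U j from rfl, hInter, le_iInf_iff]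
  intro m
  -- basic finiteness facts
  have hTtop : Tendsto T atTop (𝓝 ⊤) := by
    have := ENNReal.tendsto_nat_tsum (fun i => μ (E i))
    rwa [hdiv] at this
  have hTne : ∀ n, T n ≠ ⊤ := fun n =>
    (ENNReal.sum_lt_top.2 fun i _ => measure_lt_top μ _).ne
  have hDne : ∀ n, D n ≠ ⊤ := fun n =>
    (ENNReal.sum_lt_top.2 fun i _ => ENNReal.sum_lt_top.2 fun j _ => measure_lt_top μ _).ne
  have hTD : ∀ n, T n ≤ D n := by
    intro n
    refine Finset.sum_le_sum fun i hi => ?_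
    have : μ (E i) = μ (E i ∩ E i) := by rw [Set.inter_self]
    rw [this]
    exact Finset.single_le_sum (f := fun j => μ (E i ∩ E j)) (fun j _ => zero_le) hi
  set c : ℝ≥0∞ := T m with hcdef
  have hcne : c ≠ ⊤ := hTne m
  -- eventual facts
  have hev1 : ∀ᶠ n in atTop, c < T n := by
    have := ENNReal.tendsto_nhds_top_iff_nnreal.1 hTtop c.toNNReal
    refine this.mono fun n hn => ?_
    rwa [ENNReal.coe_toNNReal hcne] at hn
  have hev2 : ∀ᶠ n in atTop, m ≤ n := eventually_ge_atTop m
  -- T n - c is the Ico sum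
  have hsplit : ∀ n, m ≤ n → T n - c = ∑ i ∈ Finset.Ico m n, μ (E i) := by
    intro n hn
    rw [hTdef, hcdef]
    simp only []
    rw [← Finset.sum_range_add_sum_Ico (fun i => μ (E i)) hn,
      ENNReal.add_sub_cancel_left (hTne m)]
  -- Step 1: the shifted ratio is eventually ≤ μ (U m)
  have hB : ∀ᶠ n in atTop, (T n - c) ^ 2 / D n ≤ μ (U m) := by
    refine hev2.mono fun n hn => ?_
    rw [hsplit n hn]
    refine ENNReal.div_le_of_le_mul ?_
    calc (∑ i ∈ Finset.Ico m n, μ (E i)) ^ 2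
        ≤ μ (⋃ i ∈ Finset.Ico m n, E i) *
            ∑ i ∈ Finset.Ico m n, ∑ j ∈ Finset.Ico m n, μ (E i ∩ E j) :=
          cs_step μ E hE _
      _ ≤ μ (U m) * D n := by
          refine mul_le_mul' (measure_mono ?_) ?_
          · refine Set.iUnion₂_subset fun i hi => ?_
            have hmi : m ≤ i := (Finset.mem_Ico.1 hi).1
            exact Set.subset_iUnion₂ (s := fun i _ => E i) i hmi
          · have hsub : Finset.Ico m n ⊆ Finset.range n := by
              rw [Finset.range_eq_Ico]
              exact Finset.Ico_subset_Ico (Nat.zero_le m) le_rfl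
            calc ∑ i ∈ Finset.Ico m n, ∑ j ∈ Finset.Ico m n, μ (E i ∩ E j)
                ≤ ∑ i ∈ Finset.Ico m n, ∑ j ∈ Finset.range n, μ (E i ∩ E j) :=
                  Finset.sum_le_sum fun i _ =>
                    Finset.sum_le_sum_of_subset hsub
              _ ≤ D n := Finset.sum_le_sum_of_subset hsub
  -- Step 2: the correction factor tends to 1
  set g : ℕ → ℝ≥0∞ := fun n => (T n) ^ 2 / (T n - c) ^ 2 with hgdef
  have hsubtop : Tendsto (fun n => T n - c) atTop (𝓝 ⊤) := by
    rw [ENNReal.tendsto_nhds_top_iff_nnreal]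
    intro x
    have hxc : (x : ℝ≥0∞) + c ≠ ⊤ := by
      exact ENNReal.add_ne_top.2 ⟨ENNReal.coe_ne_top, hcne⟩
    have := ENNReal.tendsto_nhds_top_iff_nnreal.1 hTtop ((x : ℝ≥0∞) + c).toNNReal
    refine this.mono fun n hn => ?_
    rw [ENNReal.coe_toNNReal hxc] at hn
    exact lt_tsub_iff_right.2 hn
  have hg1 : Tendsto g atTop (𝓝 1) := by
    have hh : Tendsto (fun n => c / (T n - c)) atTop (𝓝 0) := by
      have hinv : Tendsto (fun n => (T n - c)⁻¹) atTop (𝓝 (⊤ : ℝ≥0∞)⁻¹) :=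
        ENNReal.tendsto_inv_iff.2 hsubtop
      rw [ENNReal.inv_top] at hinv
      have := ENNReal.Tendsto.const_mul hinv (Or.inr hcne)
      simpa [div_eq_mul_inv] using this
    have haux : Tendsto (fun n => (1 + c / (T n - c)) ^ 2) atTop (𝓝 1) := by
      have h1 : Tendsto (fun n => 1 + c / (T n - c)) atTop (𝓝 (1 + 0)) :=
        Tendsto.add tendsto_const_nhds hh
      rw [add_zero] at h1
      have := ENNReal.Tendsto.pow (n := 2) h1
      simpa using this
    refine haux.congr' ?_
    filter_upwards [hev1] with n hn
    have ha0 : T n - c ≠ 0 := by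
      rw [← pos_iff_ne_zero, tsub_pos_iff_lt]
      exact hn
    have hane : T n - c ≠ ⊤ := ne_top_of_le_ne_top (hTne n) tsub_le_self
    set a := T n - c with ha
    have hTeq : T n = a + c := (tsub_add_cancel_of_le hn.le).symm
    show (1 + c / a) ^ 2 = T n ^ 2 / a ^ 2
    conv_rhs => rw [hTeq, div_eq_mul_inv, ENNReal.inv_pow, ← mul_pow]
    congr 1
    rw [add_mul, ENNReal.mul_inv_cancel ha0 hane, ← div_eq_mul_inv]
  -- Step 3: combine
  have hAle : ∀ᶠ n in atTop,
      (T n) ^ 2 / D n ≤ μ (U m) * g n := by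
    filter_upwards [hev1, hB] with n hn hBn
    have ha0 : (T n - c) ^ 2 ≠ 0 := by
      apply pow_ne_zero
      rw [← pos_iff_ne_zero, tsub_pos_iff_lt]; exact hn
    have hane : (T n - c) ^ 2 ≠ ⊤ := by
      exact ENNReal.pow_ne_top (ne_top_of_le_ne_top (hTne n) tsub_le_self)
    have hident : (T n) ^ 2 / D n = ((T n - c) ^ 2 / D n) * g n := by
      rw [hgdef]
      simp only []
      rw [div_eq_mul_inv, div_eq_mul_inv, div_eq_mul_inv]
      calc (T n) ^ 2 * (D n)⁻¹
          = ((T n - c) ^ 2 * ((T n - c) ^ 2)⁻¹) * ((T n) ^ 2 * (D n)⁻¹) := by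
            rw [ENNReal.mul_inv_cancel ha0 hane, one_mul]
        _ = (T n - c) ^ 2 * (D n)⁻¹ * ((T n) ^ 2 * ((T n - c) ^ 2)⁻¹) := by
            ring
    rw [hident]
    exact mul_le_mul_left hBn _
  have hconst : Tendsto (fun n => μ (U m) * g n) atTop (𝓝 (μ (U m))) := by
    have := ENNReal.Tendsto.const_mul hg1 (Or.inr (measure_ne_top μ (U m)))
    simpa using this
  calc limsup (fun n => (T n) ^ 2 / D n) atTop
      ≤ limsup (fun n => μ (U m) * g n) atTop := limsup_le_limsup hAle
    _ = μ (U m) := hconst.limsup_eq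
end

section
/- Let p be a prime and L_1,…,L_n linear forms in variables x = (x_0,…,x_n) with coefficients in the p-adic integers ℤ_p. Let τ_1,…,τ_n be positive reals with ∑ τ_i = n+1 and σ_1,…,σ_n reals with ∑ σ_i = n. Then there exists H_σ > 0 such that for all integers H_0,…,H_n ≥ 1 with T^{n+1} := (H_0+1)⋯(H_n+1) ≥ H_σ, there exists a nonzero integer vector x = (x_0,…,x_n) ∈ ℤ^{n+1} satisfying |x_i| ≤ H_i for all 0 ≤ i ≤ n and |L_i(x)|_p ≤ p^{σ_i} T^{-τ_i} for all 1 ≤ i ≤ n. -/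
open scoped ENNReal

/-- p-adic Minkowski theorem for linear forms. Given linear forms
`Lᵢ(x) = ∑_j c i j * x j` with coefficients in `ℤ_p`, positive reals `τᵢ` with
`∑ τᵢ = n+1` and reals `σᵢ` with `∑ σᵢ = n`, there is `H_σ > 0` such that whenever
`H₀,…,Hₙ ≥ 1` and `T^{n+1} := ∏ (Hᵢ+1) ≥ H_σ`, some nonzero integer vector `x` satisfies
`|xᵢ| ≤ Hᵢ` and `|Lᵢ(x)|_p ≤ p^{σᵢ} T^{-τᵢ}`. -/
theorem stmt_2 {p : ℕ} [Fact p.Prime] (n : ℕ)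
    (c : Fin n → Fin (n + 1) → ℤ_[p]) (τ σ : Fin n → ℝ)
    (hτpos : ∀ i, 0 < τ i) (hτsum : ∑ i, τ i = n + 1) (hσsum : ∑ i, σ i = n) :
    ∃ Hσ : ℝ, 0 < Hσ ∧
      ∀ H : Fin (n + 1) → ℕ, (∀ i, 1 ≤ H i) →
        Hσ ≤ ∏ i, ((H i : ℝ) + 1) →
        ∃ x : Fin (n + 1) → ℤ, x ≠ 0 ∧ (∀ i, |x i| ≤ (H i : ℤ)) ∧
          ∀ i : Fin n,
            ‖∑ j, c i j * (x j : ℤ_[p])‖ ≤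
              (p : ℝ) ^ (σ i) * (∏ j, ((H j : ℝ) + 1)) ^ (-(τ i) / (n + 1)) := by
  have hpp : p.Prime := Fact.out
  have hp1 : (1 : ℝ) < (p : ℝ) := by exact_mod_cast hpp.one_lt
  have hp0 : (0 : ℝ) < (p : ℝ) := lt_trans one_pos hp1
  -- the case n = 0 is vacuous since ∑ τ = 0 ≠ 1
  rcases Nat.eq_zero_or_pos n with hn0 | hnpos
  · exfalso
    subst hn0
    simp at hτsum
  have hne : (Finset.univ : Finset (Fin n)).Nonempty := by
    simpa [Finset.univ_nonempty_iff] using Fin.pos_iff_nonempty.mp hnpos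
  refine ⟨1 + ∑ i, (p : ℝ) ^ (σ i * (n + 1) / τ i), by positivity, ?_⟩
  intro H hH hT
  set Tr : ℝ := ∏ i, ((H i : ℝ) + 1) with hTrdef
  have hTrpos : 0 < Tr := by positivity
  have hsum_pos : (0 : ℝ) < ∑ i, (p : ℝ) ^ (σ i * (n + 1) / τ i) :=
    Finset.sum_pos (fun i _ => by positivity) hne
  have hTr1 : 1 < Tr := lt_of_lt_of_le (by linarith) hT
  set L : ℝ := Real.logb p Tr with hLdef
  have hLpos : 0 < L := Real.logb_pos hp1 hTr1
  have hpL : (p : ℝ) ^ L = Tr := Real.rpow_logb hp0 (ne_of_gt hp1) hTrpos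
  -- each exponent `a i` is nonnegative
  set a : Fin n → ℝ := fun i => τ i / (n + 1) * L - σ i with hadef
  have hai : ∀ i, 0 ≤ a i := by
    intro i
    have hTi : (p : ℝ) ^ (σ i * (n + 1) / τ i) ≤ Tr := by
      refine le_trans ?_ hT
      have : (p : ℝ) ^ (σ i * (n + 1) / τ i) ≤ ∑ j, (p : ℝ) ^ (σ j * (n + 1) / τ j) :=
        Finset.single_le_sum (f := fun j => (p : ℝ) ^ (σ j * (n + 1) / τ j))
          (fun j _ => by positivity) (Finset.mem_univ i)
      linarith
    have hlogb : σ i * (n + 1) / τ i ≤ L :=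
      (Real.rpow_le_rpow_left_iff hp1).mp (by rw [hpL]; exact hTi)
    have hτi := hτpos i
    have hn1 : (0 : ℝ) < (n : ℝ) + 1 := by positivity
    rw [hadef]
    simp only
    rw [sub_nonneg, div_mul_eq_mul_div, le_div_iff₀ hn1]
    calc σ i * ((n : ℝ) + 1) = (σ i * (n + 1) / τ i) * τ i := by field_simp
      _ ≤ L * τ i := by nlinarith
      _ = τ i * L := mul_comm _ _
  set k : Fin n → ℕ := fun i => (⌈a i⌉).toNat with hkdef
  have hkcast : ∀ i, (k i : ℝ) = (⌈a i⌉ : ℤ) := by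
    intro i
    rw [hkdef]
    simp only
    exact_mod_cast congrArg (Int.cast : ℤ → ℝ) (Int.toNat_of_nonneg (Int.ceil_nonneg (hai i)))
  have hka : ∀ i, a i ≤ (k i : ℝ) := fun i => by rw [hkcast i]; exact Int.le_ceil _
  have hka' : ∀ i, (k i : ℝ) < a i + 1 := fun i => by rw [hkcast i]; exact Int.ceil_lt_add_one _
  -- the sum of the `k i` is strictly less than `L`
  have hsumk : (∑ i, (k i : ℝ)) < L := by
    have h1 : (∑ i, (k i : ℝ)) < ∑ i, (a i + 1) :=
      Finset.sum_lt_sum_of_nonempty hne fun i _ => hka' i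
    have h2 : ∑ i, (a i + 1) = L := by
      have hn1 : ((n : ℝ) + 1) ≠ 0 := by positivity
      have e1 : ∀ i, a i + 1 = τ i * (L / (n + 1)) - σ i + 1 := fun i => by rw [hadef]; ring
      simp only [e1, Finset.sum_add_distrib, Finset.sum_sub_distrib, ← Finset.sum_mul,
        hτsum, hσsum, Finset.sum_const, Finset.card_univ, Fintype.card_fin, nsmul_eq_mul,
        mul_one]
      field_simp
      ring
    linarith [h1, h2.le, h2.ge]
  -- pigeonhole setup
  haveI : ∀ i : Fin n, NeZero (p ^ k i) := fun i => ⟨pow_ne_zero _ hpp.ne_zero⟩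
  have hcard : Fintype.card (∀ i : Fin n, ZMod (p ^ k i)) <
      Fintype.card (∀ j : Fin (n + 1), Fin (H j + 1)) := by
    rw [Fintype.card_pi, Fintype.card_pi]
    simp only [ZMod.card, Fintype.card_fin]
    have hlhs : ((∏ i : Fin n, p ^ k i : ℕ) : ℝ) < Tr := by
      rw [Finset.prod_pow_eq_pow_sum]
      push_cast
      calc ((p : ℝ)) ^ ((∑ i, k i : ℕ) : ℕ)
          = (p : ℝ) ^ (((∑ i, k i : ℕ) : ℕ) : ℝ) := (Real.rpow_natCast _ _).symm
        _ < (p : ℝ) ^ L := (Real.rpow_lt_rpow_left_iff hp1).mpr (by push_cast; exact hsumk)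
        _ = Tr := hpL
    have hrhs : ((∏ j : Fin (n + 1), (H j + 1) : ℕ) : ℝ) = Tr := by push_cast; rfl
    exact_mod_cast hrhs ▸ hlhs
  set f : (∀ j : Fin (n + 1), Fin (H j + 1)) → (∀ i : Fin n, ZMod (p ^ k i)) :=
    fun v i => ∑ j, PadicInt.toZModPow (k i) (c i j) * ((v j : ℕ) : ZMod (p ^ k i)) with hfdef
  obtain ⟨v, w, hvw, hfeq⟩ := Fintype.exists_ne_map_eq_of_card_lt f hcard
  refine ⟨fun j => ((v j : ℕ) : ℤ) - ((w j : ℕ) : ℤ), ?_, ?_, ?_⟩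
  · intro hx0
    apply hvw
    funext j
    have := congrFun hx0 j
    simp only [Pi.zero_apply, sub_eq_zero] at this
    have h2 : (v j : ℕ) = (w j : ℕ) := by exact_mod_cast this
    exact Fin.ext h2
  · intro j
    have h1 : (v j : ℕ) ≤ H j := Nat.lt_succ_iff.mp (v j).isLt
    have h2 : (w j : ℕ) ≤ H j := Nat.lt_succ_iff.mp (w j).isLt
    rw [abs_sub_le_iff]
    constructor <;> [skip; skip] <;> omega
  · intro i
    -- the image of the linear form in `ZMod (p ^ k i)` vanishes
    have hzero : PadicInt.toZModPow (k i)
        (∑ j, c i j * ((((v j : ℕ) : ℤ) - ((w j : ℕ) : ℤ) : ℤ) : ℤ_[p])) = 0 := by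
      rw [map_sum]
      have : ∀ j, PadicInt.toZModPow (k i) (c i j * ((((v j : ℕ) : ℤ) - ((w j : ℕ) : ℤ) : ℤ) : ℤ_[p]))
          = PadicInt.toZModPow (k i) (c i j) *
            (((v j : ℕ) : ZMod (p ^ k i)) - ((w j : ℕ) : ZMod (p ^ k i))) := by
        intro j
        rw [map_mul]
        congr 1
        have hc : ((((v j : ℕ) : ℤ) - ((w j : ℕ) : ℤ) : ℤ) : ℤ_[p])
            = ((v j : ℕ) : ℤ_[p]) - ((w j : ℕ) : ℤ_[p]) := by push_cast; ring
        rw [hc, map_sub, map_natCast, map_natCast]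
      simp only [this, mul_sub, Finset.sum_sub_distrib]
      have := congrFun hfeq i
      simp only [hfdef] at this
      rw [this, sub_self]
    have hnorm : ‖∑ j, c i j * ((((v j : ℕ) : ℤ) - ((w j : ℕ) : ℤ) : ℤ) : ℤ_[p])‖
        ≤ (p : ℝ) ^ (-(k i : ℤ)) := by
      rw [PadicInt.norm_le_pow_iff_mem_span_pow, ← PadicInt.ker_toZModPow, RingHom.mem_ker]
      exact hzero
    refine le_trans hnorm ?_
    have hstep : (p : ℝ) ^ (-(k i : ℤ)) = (p : ℝ) ^ (-(k i : ℝ)) := by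
      rw [← Real.rpow_intCast]
      push_cast
      ring_nf
    rw [hstep]
    have hexp : -(k i : ℝ) ≤ σ i + L * (-(τ i) / (n + 1)) := by
      have h1 : τ i / (n + 1) * L - σ i ≤ (k i : ℝ) := hka i
      have h2 : L * (-(τ i) / (n + 1)) = -(τ i / (n + 1) * L) := by ring
      linarith
    calc (p : ℝ) ^ (-(k i : ℝ)) ≤ (p : ℝ) ^ (σ i + L * (-(τ i) / (n + 1))) :=
          Real.rpow_le_rpow_left_iff hp1 |>.mpr hexp
      _ = (p : ℝ) ^ (σ i) * ((p : ℝ) ^ L) ^ (-(τ i) / (n + 1)) := by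
          rw [Real.rpow_add hp0, Real.rpow_mul (le_of_lt hp0)]
      _ = (p : ℝ) ^ (σ i) * Tr ^ (-(τ i) / (n + 1)) := by rw [hpL]
end

section
/- Let p be prime, n ≥ 1, and ψ_1,…,ψ_n : ℕ → ℝ₊ with ψ_i(q) < 1/q. For distinct a_0, b_0 ∈ ℕ coprime to p, the Haar measure of the intersection 𝔄'_{a_0}(Ψ) ∩ 𝔄'_{b_0}(Ψ) satisfies μ_{p,n}(𝔄'_{a_0}(Ψ) ∩ 𝔄'_{b_0}(Ψ)) ≪ a_0^n b_0^n ∏_{i=1}^n ψ_i(a_0) ψ_i(b_0), with an implied constant depending only on p and n. -/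
open MeasureTheory Filter
open scoped ENNReal

/-- The rectangle of points of `ℤ_p^n` lying `ψ i a0`-close to `(a i / a0)` in each
coordinate. -/
def rect (p : ℕ) [Fact p.Prime] (n : ℕ) (ψ : Fin n → ℕ → ℝ) (a0 : ℕ)
    (a : Fin n → ℤ) : Set (Fin n → ℤ_[p]) :=
  {x | ∀ i, ‖(x i : ℚ_[p]) - (a i : ℚ_[p]) / (a0 : ℚ_[p])‖ < ψ i a0}

/-- Admissible numerator vectors: `|a i| ≤ a0` and `gcd (a i) a0 = 1`. -/
def adm (n : ℕ) (a0 : ℕ) : Set (Fin n → ℤ) :=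
  {a | ∀ i, |a i| ≤ (a0 : ℤ) ∧ Int.gcd (a i) a0 = 1}

/-- The set `𝔄'_{a0}(Ψ)`. -/
def Aset (p : ℕ) [Fact p.Prime] (n : ℕ) (ψ : Fin n → ℕ → ℝ) (a0 : ℕ) :
    Set (Fin n → ℤ_[p]) :=
  ⋃ a ∈ adm n a0, rect p n ψ a0 a

/-- The limsup set `𝔚'_n(Ψ) = limsup_{a0 → ∞} 𝔄'_{a0}(Ψ)`. -/
def Wset' (p : ℕ) [Fact p.Prime] (n : ℕ) (ψ : Fin n → ℕ → ℝ) :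
    Set (Fin n → ℤ_[p]) :=
  ⋂ N, ⋃ a0, ⋃ (_ : N ≤ a0), Aset p n ψ a0

set_option maxHeartbeats 1000000

section auxiliary

/-- Counting lemma: pairs `(α,β)` in a box with `P*g ∣ α b0 - β a0 ≠ 0` are few. -/
lemma count_lemma {a0 b0 P : ℕ} (ha : 0 < a0) (hb : 0 < b0) (hP : 0 < P)
    (S : Finset (ℤ × ℤ))
    (hS : ∀ q ∈ S, q.1 ∈ Finset.Icc (-(a0:ℤ)) a0 ∧ q.2 ∈ Finset.Icc (-(b0:ℤ)) b0 ∧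
      ((P * Nat.gcd a0 b0 : ℕ) : ℤ) ∣ (q.1 * b0 - q.2 * a0) ∧ q.1 * b0 - q.2 * a0 ≠ 0) :
    S.card * P ≤ 30 * (a0 * b0) := by
  classical
  set g : ℕ := Nat.gcd a0 b0 with hg
  have hg0 : 0 < g := Nat.gcd_pos_of_pos_left _ ha
  set L : ℕ := P * g with hLdef
  have hL0 : 0 < L := Nat.mul_pos hP hg0
  set D : ℤ × ℤ → ℤ := fun q => q.1 * b0 - q.2 * a0 with hD
  have hS' : ∀ q ∈ S, q.1 ∈ Finset.Icc (-(a0:ℤ)) a0 ∧ q.2 ∈ Finset.Icc (-(b0:ℤ)) b0 ∧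
      ((L : ℕ) : ℤ) ∣ D q ∧ D q ≠ 0 := hS
  rcases S.eq_empty_or_nonempty with h | ⟨q0, hq0⟩
  · simp [h]
  have habs : ∀ q ∈ S, |D q| ≤ 2 * (a0 * b0 : ℤ) := by
    intro q hq
    obtain ⟨h1, h2, -, -⟩ := hS' q hq
    rw [Finset.mem_Icc] at h1 h2
    have e1 : |q.1| ≤ (a0:ℤ) := abs_le.mpr h1
    have e2 : |q.2| ≤ (b0:ℤ) := abs_le.mpr h2
    calc |D q| ≤ |q.1 * b0| + |q.2 * a0| := by
            simpa [hD, sub_eq_add_neg] using abs_add_le (q.1 * b0) (-(q.2 * a0))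
      _ = |q.1| * b0 + |q.2| * a0 := by
            rw [abs_mul, abs_mul]; push_cast; simp [abs_of_nonneg]
      _ ≤ (a0:ℤ) * b0 + (b0:ℤ) * a0 := by
            have hb0 : (0:ℤ) ≤ b0 := by positivity
            have ha0 : (0:ℤ) ≤ a0 := by positivity
            gcongr
      _ = 2 * (a0 * b0 : ℤ) := by ring
  have hLle : (L : ℤ) ≤ 2 * (a0 * b0 : ℤ) := by
    obtain ⟨-, -, hdvd, hne⟩ := hS' q0 hq0
    have : (L:ℤ) ∣ |D q0| := (dvd_abs _ _).mpr hdvd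
    exact le_trans (Int.le_of_dvd (abs_pos.mpr hne) this) (habs q0 hq0)
  set Q : ℕ := 2 * (a0 * b0) / L with hQdef
  -- image bound
  have himg : (S.image D).card ≤ 2 * Q + 1 := by
    have hmaps : ∀ d ∈ S.image D, d / (L:ℤ) ∈ Finset.Icc (-(Q:ℤ)) (Q:ℤ) := by
      intro d hd
      obtain ⟨q, hq, rfl⟩ := Finset.mem_image.mp hd
      obtain ⟨-, -, hdvd, -⟩ := hS' q hq
      obtain ⟨m, hm⟩ := hdvd
      have hLne : (L:ℤ) ≠ 0 := by exact_mod_cast hL0.ne'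
      rw [hm, Int.mul_ediv_cancel_left _ hLne]
      have h1 : |m| * L ≤ 2 * (a0*b0 : ℤ) := by
        have h := habs q hq
        rw [hm, abs_mul, abs_of_nonneg (by positivity : (0:ℤ) ≤ (L:ℤ))] at h
        linarith
      have h2 : |m| ≤ (Q:ℤ) := by
        rw [hQdef]
        push_cast [Int.natCast_div]
        rw [Int.le_ediv_iff_mul_le (by exact_mod_cast hL0)]
        push_cast at h1 ⊢
        linarith
      rw [Finset.mem_Icc]
      exact abs_le.mp h2
    have hinj : Set.InjOn (fun d => d / (L:ℤ)) (S.image D) := by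
      intro d1 h1 d2 h2 hdd
      obtain ⟨q1, hq1, rfl⟩ := Finset.mem_image.mp h1
      obtain ⟨q2, hq2, rfl⟩ := Finset.mem_image.mp h2
      obtain ⟨-, -, hdvd1, -⟩ := hS' q1 hq1
      obtain ⟨-, -, hdvd2, -⟩ := hS' q2 hq2
      have e1 := Int.ediv_mul_cancel hdvd1
      have e2 := Int.ediv_mul_cancel hdvd2
      simp only at hdd
      rw [← e1, ← e2, hdd]
    calc (S.image D).card ≤ (Finset.Icc (-(Q:ℤ)) (Q:ℤ)).card :=
          Finset.card_le_card_of_injOn _ hmaps hinj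
      _ = 2 * Q + 1 := by rw [Int.card_Icc]; push_cast; omega
  -- fiber bound
  have hfib : ∀ d ∈ S.image D, (S.filter (fun q => D q = d)).card ≤ 5 * g := by
    intro d hd
    obtain ⟨q0', hq0', rfl⟩ := Finset.mem_image.mp hd
    set M : ℕ := a0 / g with hMdef
    set N : ℕ := b0 / g with hNdef
    have hMg : M * g = a0 := Nat.div_mul_cancel (Nat.gcd_dvd_left _ _)
    have hNg : N * g = b0 := Nat.div_mul_cancel (Nat.gcd_dvd_right _ _)
    have hM0 : 0 < M := Nat.div_pos (Nat.le_of_dvd ha (Nat.gcd_dvd_left _ _)) hg0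
    have hdvd_fiber : ∀ q ∈ S.filter (fun q => D q = D q0'), (M:ℤ) ∣ (q.1 - q0'.1) := by
      intro q hq
      rw [Finset.mem_filter] at hq
      obtain ⟨hqS, hqd⟩ := hq
      have key : (q.1 - q0'.1) * (N:ℤ) = (q.2 - q0'.2) * (M:ℤ) := by
        have hthis : q.1 * b0 - q.2 * a0 = q0'.1 * b0 - q0'.2 * a0 := hqd
        have hgne : (g:ℤ) ≠ 0 := by exact_mod_cast hg0.ne'
        have ha0' : ((a0:ℕ):ℤ) = (M:ℤ) * g := by exact_mod_cast (hMg ▸ rfl : (M*g:ℕ) = a0).symm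
        have hb0' : ((b0:ℕ):ℤ) = (N:ℤ) * g := by exact_mod_cast (hNg ▸ rfl : (N*g:ℕ) = b0).symm
        apply mul_right_cancel₀ hgne
        rw [ha0', hb0'] at hthis
        ring_nf
        ring_nf at hthis
        linarith
      have hcop : IsCoprime (M:ℤ) (N:ℤ) :=
        Nat.isCoprime_iff_coprime.mpr (Nat.coprime_div_gcd_div_gcd hg0)
      have hdd : (M:ℤ) ∣ (q.1 - q0'.1) * N := ⟨q.2 - q0'.2, by linarith [key]⟩
      exact hcop.dvd_of_dvd_mul_right hdd
    have hmaps : ∀ q ∈ S.filter (fun q => D q = D q0'),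
        (q.1 - q0'.1) / (M:ℤ) ∈ Finset.Icc (-(2*g:ℤ)) (2*g:ℤ) := by
      intro q hq
      have hdvdM := hdvd_fiber q hq
      rw [Finset.mem_filter] at hq
      obtain ⟨hqS, hqd⟩ := hq
      obtain ⟨h1, -, -, -⟩ := hS' q hqS
      obtain ⟨h1', -, -, -⟩ := hS' q0' hq0'
      rw [Finset.mem_Icc] at h1 h1'
      obtain ⟨e, he⟩ := hdvdM
      have hMne : (M:ℤ) ≠ 0 := by exact_mod_cast hM0.ne'
      rw [he, Int.mul_ediv_cancel_left _ hMne]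
      have habs1 : |q.1 - q0'.1| ≤ 2 * a0 := by
        have := h1.1; have := h1.2; have := h1'.1; have := h1'.2
        rw [abs_le]; constructor <;> linarith
      have : |e| * M ≤ 2 * (a0:ℤ) := by
        rw [he, abs_mul, abs_of_nonneg (by positivity : (0:ℤ) ≤ (M:ℤ))] at habs1
        linarith
      have he2 : |e| ≤ 2 * (g:ℤ) := by
        have hMg' : ((a0:ℕ):ℤ) = (M:ℤ) * g := by exact_mod_cast (hMg ▸ rfl : (M*g:ℕ) = a0).symm
        nlinarith [abs_nonneg e, (by exact_mod_cast hM0 : (0:ℤ) < (M:ℤ)),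
          (by exact_mod_cast hg0 : (0:ℤ) < (g:ℤ))]
      rw [Finset.mem_Icc]; exact abs_le.mp he2
    have hinj : Set.InjOn (fun q : ℤ × ℤ => (q.1 - q0'.1) / (M:ℤ))
        (S.filter (fun q => D q = D q0')) := by
      intro q1 hq1 q2 hq2 hee
      have hq1' := Finset.mem_coe.mp hq1
      have hq2' := Finset.mem_coe.mp hq2
      have hd1 := hdvd_fiber q1 hq1'
      have hd2 := hdvd_fiber q2 hq2'
      simp only at hee
      have h11 : q1.1 = q2.1 := by
        have e1 := Int.ediv_mul_cancel hd1
        have e2 := Int.ediv_mul_cancel hd2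
        have hmm := congrArg (· * (M:ℤ)) hee
        rw [e1, e2] at hmm
        linarith
      rw [Finset.mem_filter] at hq1' hq2'
      have hD12 : D q1 = D q2 := by rw [hq1'.2, hq2'.2]
      have h22 : q1.2 = q2.2 := by
        have ha0ne : ((a0:ℕ):ℤ) ≠ 0 := by exact_mod_cast ha.ne'
        have hh : q1.1 * b0 - q1.2 * a0 = q2.1 * b0 - q2.2 * a0 := hD12
        apply mul_right_cancel₀ ha0ne
        rw [h11] at hh
        linarith
      exact Prod.ext h11 h22
    calc (S.filter (fun q => D q = D q0')).card
        ≤ (Finset.Icc (-(2*g:ℤ)) (2*g:ℤ)).card :=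
          Finset.card_le_card_of_injOn _ hmaps hinj
      _ = 4 * g + 1 := by rw [Int.card_Icc]; push_cast; omega
      _ ≤ 5 * g := by omega
  -- combine
  have hcards : S.card ≤ 5 * g * (S.image D).card :=
    Finset.card_le_mul_card_image S (5*g) hfib
  have hQL : Q * L ≤ 2 * (a0 * b0) := Nat.div_mul_le_self _ _
  have hLn : L ≤ 2 * (a0 * b0) := by exact_mod_cast hLle
  calc S.card * P ≤ (5 * g * (2 * Q + 1)) * P := by
        apply Nat.mul_le_mul_right
        exact le_trans hcards (Nat.mul_le_mul_left _ himg)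
    _ = 10 * (Q * L) + 5 * L := by rw [hLdef]; ring
    _ ≤ 10 * (2 * (a0*b0)) + 5 * (2 * (a0*b0)) :=
        Nat.add_le_add (Nat.mul_le_mul_left _ hQL) (Nat.mul_le_mul_left _ hLn)
    _ = 30 * (a0 * b0) := by ring


section padicAux
variable {p : ℕ} [hp : Fact p.Prime]

lemma inv_pow_eq_zpow (m : ℕ) : ((p:ℝ)^m)⁻¹ = (p:ℝ)^(-(m:ℤ)) := by
  rw [zpow_neg, zpow_natCast]

/-- Discreteness of the p-adic norm on `ℤ_[p]`. -/
lemma norm_le_inv_pow_of_lt {x : ℤ_[p]} {r : ℝ} {k : ℕ}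
    (hmin : ∀ m : ℕ, ((p:ℝ)^m)⁻¹ < r → k ≤ m) (hx : ‖x‖ < r) :
    ‖x‖ ≤ ((p:ℝ)^k)⁻¹ := by
  cases k with
  | zero => simpa using x.norm_le_one
  | succ m =>
    have hr : r ≤ ((p:ℝ)^m)⁻¹ := by
      by_contra h
      exact absurd (hmin m (lt_of_not_ge h)) (by omega)
    have : ‖x‖ < (p:ℝ)^(-(m:ℤ)) := by
      rw [← inv_pow_eq_zpow]; exact lt_of_lt_of_le hx hr
    have := (PadicInt.norm_lt_pow_iff_norm_le_pow_sub_one x (-(m:ℤ))).mp this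
    rw [inv_pow_eq_zpow]
    convert this using 2
    push_cast; ring

/-- Same for integers in `ℚ_[p]`, giving divisibility. -/
lemma int_dvd_of_norm_lt {D : ℤ} {r : ℝ} {v : ℕ}
    (hmin : ∀ m : ℕ, ((p:ℝ)^m)⁻¹ < r → v ≤ m) (hD : ‖(D : ℚ_[p])‖ < r) :
    (p^v : ℤ) ∣ D := by
  rw [← Padic.norm_int_le_pow_iff_dvd]
  cases v with
  | zero => simpa using Padic.norm_int_le_one D
  | succ m =>
    have hr : r ≤ ((p:ℝ)^m)⁻¹ := by
      by_contra h
      exact absurd (hmin m (lt_of_not_ge h)) (by omega)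
    have h1 : ‖(D:ℚ_[p])‖ < (p:ℝ)^(-(m:ℤ)) := by
      rw [← inv_pow_eq_zpow]; exact lt_of_lt_of_le hD hr
    have := (Padic.norm_lt_pow_iff_norm_le_pow_sub_one (D:ℚ_[p]) (-(m:ℤ))).mp h1
    convert this using 2
    push_cast; ring

/-- Norm-one for naturals coprime to `p`. -/
lemma norm_natCast_eq_one {m : ℕ} (h : Nat.Coprime m p) : ‖((m:ℕ) : ℚ_[p])‖ = 1 := by
  have h1 : ‖((m:ℤ) : ℚ_[p])‖ ≤ 1 := Padic.norm_int_le_one _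
  have h2 : ¬ ‖((m:ℤ) : ℚ_[p])‖ < 1 := by
    rw [Padic.norm_intCast_lt_one_iff]
    intro hdvd
    have hpm : p ∣ m := by exact_mod_cast hdvd
    have : p ∣ 1 := h ▸ Nat.dvd_gcd hpm dvd_rfl
    exact Nat.Prime.one_lt hp.out |>.ne' (Nat.dvd_one.mp this)
  have : ‖((m:ℤ) : ℚ_[p])‖ = 1 := le_antisymm h1 (not_lt.mp h2)
  simpa using this

end padicAux

section measAux
variable {p : ℕ} [hp : Fact p.Prime]

/-- Haar probability measure of a coset of `∏ p^(k i) ℤ_p`. -/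
lemma meas_coset (n : ℕ) [MeasurableSpace (Fin n → ℤ_[p])]
    [BorelSpace (Fin n → ℤ_[p])] (μ : Measure (Fin n → ℤ_[p]))
    [μ.IsAddHaarMeasure] [IsProbabilityMeasure μ] (k : Fin n → ℕ) (t : Fin n → ℤ_[p]) :
    μ {x | ∀ i, (p:ℤ_[p])^(k i) ∣ (x i - t i)} ≤ (∏ i, ((p:ℝ≥0∞))^(k i))⁻¹ := by
  classical
  haveI : MeasurableAdd (Fin n → ℤ_[p]) :=
    { measurable_const_add := fun c => (continuous_const.add continuous_id).measurable
      measurable_add_const := fun c => (continuous_id.add continuous_const).measurable }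
  set P : (Fin n → ℤ_[p]) → Set (Fin n → ℤ_[p]) :=
    fun s => {x | ∀ i, (p:ℤ_[p])^(k i) ∣ (x i - s i)} with hPdef
  have hmeas : ∀ s, MeasurableSet (P s) := by
    intro s
    have : P s = ⋂ i, {x : Fin n → ℤ_[p] | ‖x i - s i‖ ≤ (p:ℝ)^(-(k i:ℤ))} := by
      ext x
      simp only [hPdef, Set.mem_setOf_eq, Set.mem_iInter]
      refine forall_congr' fun i => ?_
      rw [PadicInt.norm_le_pow_iff_mem_span_pow, Ideal.mem_span_singleton]
    rw [this]
    refine MeasurableSet.iInter fun i => ?_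
    exact (isClosed_le (((continuous_apply i).sub continuous_const).norm)
      continuous_const).measurableSet
  have htrans : ∀ s, μ (P s) = μ (P 0) := by
    intro s
    have : P s = (fun x => (-s) + x) ⁻¹' (P 0) := by
      ext x
      simp only [hPdef, Set.mem_setOf_eq, Set.mem_preimage, Pi.add_apply, Pi.neg_apply,
        Pi.zero_apply, sub_zero]
      refine forall_congr' fun i => ?_
      rw [neg_add_eq_sub]
    rw [this, measure_preimage_add]
  haveI : ∀ i, NeZero (p ^ k i) := fun i => ⟨(pow_pos hp.out.pos _).ne'⟩
  set tc : (∀ i, ZMod (p ^ k i)) → (Fin n → ℤ_[p]) := fun c i => ((c i).val : ℤ_[p]) with htc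
  have hmem : ∀ (c : ∀ i, ZMod (p ^ k i)) (x : Fin n → ℤ_[p]),
      x ∈ P (tc c) ↔ ∀ i, PadicInt.toZModPow (k i) (x i) = c i := by
    intro c x
    simp only [hPdef, Set.mem_setOf_eq]
    refine forall_congr' fun i => ?_
    rw [← Ideal.mem_span_singleton, ← PadicInt.ker_toZModPow, RingHom.mem_ker, map_sub,
      sub_eq_zero]
    have : PadicInt.toZModPow (k i) (tc c i) = c i := by
      show PadicInt.toZModPow (k i) (((c i).val : ℕ) : ℤ_[p]) = c i
      rw [map_natCast, ZMod.natCast_val, ZMod.cast_id]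
    rw [this]
  have hcover : (Set.univ : Set (Fin n → ℤ_[p])) = ⋃ c, P (tc c) := by
    ext x
    simp only [Set.mem_univ, true_iff, Set.mem_iUnion]
    exact ⟨fun i => PadicInt.toZModPow (k i) (x i), (hmem _ _).mpr fun i => rfl⟩
  have hdisj : Pairwise (Function.onFun Disjoint fun c => P (tc c)) := by
    intro c c' hcc
    refine Set.disjoint_left.mpr fun x hx hx' => hcc ?_
    funext i
    rw [← (hmem c x).mp hx i, (hmem c' x).mp hx' i]
  have hsum : (1:ℝ≥0∞) = ∑ c : (∀ i, ZMod (p ^ k i)), μ (P (tc c)) := by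
    rw [← measure_univ (μ := μ), hcover, measure_iUnion hdisj fun c => hmeas _, tsum_fintype]
  have hcard : (Fintype.card (∀ i, ZMod (p ^ k i)) : ℝ≥0∞) * μ (P 0) = 1 := by
    rw [hsum]
    simp only [htrans, Finset.sum_const, Finset.card_univ, nsmul_eq_mul]
  have hcast : (Fintype.card (∀ i, ZMod (p ^ k i)) : ℝ≥0∞) = ∏ i, ((p:ℝ≥0∞))^(k i) := by
    rw [Fintype.card_pi]
    push_cast [ZMod.card]
    rfl
  calc μ {x | ∀ i, (p:ℤ_[p])^(k i) ∣ (x i - t i)} = μ (P 0) := htrans t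
    _ ≤ (∏ i, ((p:ℝ≥0∞))^(k i))⁻¹ := by
        rw [ENNReal.le_inv_iff_mul_le, mul_comm, ← hcast, hcard]

end measAux

end auxiliary

/-- For positive  with  and distinct  coprime
to , the Haar probability measure of  is
, with constant depending only on  and . -/
theorem stmt_4 (p n : ℕ) [Fact p.Prime] (hn : 1 ≤ n)
    [MeasurableSpace (Fin n → ℤ_[p])] [BorelSpace (Fin n → ℤ_[p])] :
    ∃ C : ℝ≥0∞, C < ⊤ ∧
      ∀ ψ : Fin n → ℕ → ℝ, (∀ (i : Fin n) (q : ℕ), 0 < q → 0 < ψ i q ∧ ψ i q < 1 / q) →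
        ∀ a0 b0 : ℕ, 0 < a0 → 0 < b0 → a0 ≠ b0 →
          Nat.Coprime a0 p → Nat.Coprime b0 p →
          ∀ μ : Measure (Fin n → ℤ_[p]), μ.IsAddHaarMeasure → IsProbabilityMeasure μ →
            μ (Aset p n ψ a0 ∩ Aset p n ψ b0) ≤
              C * ENNReal.ofReal
                ((a0 : ℝ) ^ n * (b0 : ℝ) ^ n * ∏ i, ψ i a0 * ψ i b0) := by
  classical
  have hpp : p.Prime := Fact.out
  refine ⟨(30:ℝ≥0∞)^n, ENNReal.pow_lt_top (by norm_num), ?_⟩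
  intro ψ hψ a0 b0 ha0 hb0 hab ha0p hb0p μ hμ hprob
  haveI := hμ; haveI := hprob
  have hr : ∀ i, 0 < ψ i a0 := fun i => (hψ i a0 ha0).1
  have hs : ∀ i, 0 < ψ i b0 := fun i => (hψ i b0 hb0).1
  have hp0 : (0:ℝ) < p := by exact_mod_cast hpp.pos
  -- minimal exponents
  have hex : ∀ t : ℝ, 0 < t → ∃ m : ℕ, ((p:ℝ)^m)⁻¹ < t := by
    intro t ht
    have hp1 : (p:ℝ)⁻¹ < 1 := by
      rw [inv_lt_one_iff₀]
      right
      exact_mod_cast hpp.one_lt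
    obtain ⟨m, hm⟩ := exists_pow_lt_of_lt_one ht hp1
    exact ⟨m, by rwa [← inv_pow]⟩
  have hexk : ∀ i, ∃ m : ℕ, ((p:ℝ)^m)⁻¹ < min (ψ i a0) (ψ i b0) :=
    fun i => hex _ (lt_min (hr i) (hs i))
  have hexv : ∀ i, ∃ m : ℕ, ((p:ℝ)^m)⁻¹ < max (ψ i a0) (ψ i b0) :=
    fun i => hex _ (lt_of_lt_of_le (hr i) (le_max_left _ _))
  set k : Fin n → ℕ := fun i => Nat.find (hexk i) with hkdef
  set v : Fin n → ℕ := fun i => Nat.find (hexv i) with hvdef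
  -- coordinate finsets
  set Sf : Fin n → Finset (ℤ × ℤ) := fun i =>
    ((Finset.Icc (-(a0:ℤ)) a0) ×ˢ (Finset.Icc (-(b0:ℤ)) b0)).filter
      (fun q => Int.gcd q.1 a0 = 1 ∧ Int.gcd q.2 b0 = 1 ∧
        ∃ y : ℤ_[p], ‖(y:ℚ_[p]) - (q.1:ℚ_[p]) / (a0:ℚ_[p])‖ < ψ i a0 ∧
          ‖(y:ℚ_[p]) - (q.2:ℚ_[p]) / (b0:ℚ_[p])‖ < ψ i b0) with hSfdef
  set R : (Fin n → ℤ × ℤ) → Set (Fin n → ℤ_[p]) := fun c =>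
    {x | ∀ i, ‖(x i : ℚ_[p]) - ((c i).1:ℚ_[p]) / (a0:ℚ_[p])‖ < ψ i a0 ∧
      ‖(x i : ℚ_[p]) - ((c i).2:ℚ_[p]) / (b0:ℚ_[p])‖ < ψ i b0} with hRdef
  -- cover
  have hcover : Aset p n ψ a0 ∩ Aset p n ψ b0 ⊆ ⋃ c ∈ Fintype.piFinset Sf, R c := by
    rintro x ⟨hxa, hxb⟩
    obtain ⟨a, ha, hxa⟩ := Set.mem_iUnion₂.mp hxa
    obtain ⟨b, hb, hxb⟩ := Set.mem_iUnion₂.mp hxb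
    refine Set.mem_iUnion₂.mpr ⟨fun i => (a i, b i), ?_, fun i => ⟨hxa i, hxb i⟩⟩
    rw [Fintype.mem_piFinset]
    intro i
    rw [hSfdef]
    simp only [Finset.mem_filter, Finset.mem_product, Finset.mem_Icc]
    obtain ⟨h1, h2⟩ := ha i
    obtain ⟨h3, h4⟩ := hb i
    exact ⟨⟨abs_le.mp h1, abs_le.mp h3⟩, h2, h4, x i, hxa i, hxb i⟩
  -- per-cell measure bound
  set Vol : ℝ≥0∞ := (∏ i, ((p:ℝ≥0∞))^(k i))⁻¹ with hVoldef
  have hRc : ∀ c ∈ Fintype.piFinset Sf, μ (R c) ≤ Vol := by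
    intro c hc
    have hball : ∀ i, ∃ y : ℤ_[p], ‖(y:ℚ_[p]) - ((c i).1:ℚ_[p]) / (a0:ℚ_[p])‖ < ψ i a0 ∧
        ‖(y:ℚ_[p]) - ((c i).2:ℚ_[p]) / (b0:ℚ_[p])‖ < ψ i b0 := by
      intro i
      have := Fintype.mem_piFinset.mp hc i
      rw [hSfdef] at this
      simp only [Finset.mem_filter] at this
      exact this.2.2.2
    choose y0 hy1 hy2 using hball
    have hsub : R c ⊆ {x | ∀ i, (p:ℤ_[p])^(k i) ∣ (x i - y0 i)} := by
      intro x hx i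
      obtain ⟨hxa, hxb⟩ := hx i
      have hna : ‖(x i : ℚ_[p]) - (y0 i : ℚ_[p])‖ < ψ i a0 := by
        have he : (x i:ℚ_[p]) - (y0 i:ℚ_[p]) =
            ((x i:ℚ_[p]) - ((c i).1:ℚ_[p]) / (a0:ℚ_[p]))
            + (((c i).1:ℚ_[p]) / (a0:ℚ_[p]) - (y0 i:ℚ_[p])) := by ring
        rw [he]
        refine lt_of_le_of_lt (Padic.nonarchimedean _ _) (max_lt hxa ?_)
        rw [norm_sub_rev]
        exact hy1 i
      have hnb : ‖(x i : ℚ_[p]) - (y0 i : ℚ_[p])‖ < ψ i b0 := by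
        have he : (x i:ℚ_[p]) - (y0 i:ℚ_[p]) =
            ((x i:ℚ_[p]) - ((c i).2:ℚ_[p]) / (b0:ℚ_[p]))
            + (((c i).2:ℚ_[p]) / (b0:ℚ_[p]) - (y0 i:ℚ_[p])) := by ring
        rw [he]
        refine lt_of_le_of_lt (Padic.nonarchimedean _ _) (max_lt hxb ?_)
        rw [norm_sub_rev]
        exact hy2 i
      have hmin : ‖x i - y0 i‖ < min (ψ i a0) (ψ i b0) := by
        rw [PadicInt.norm_def, PadicInt.coe_sub]
        exact lt_min hna hnb
      have hle : ‖x i - y0 i‖ ≤ ((p:ℝ)^(k i))⁻¹ :=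
        norm_le_inv_pow_of_lt (fun m hm => Nat.find_min' (hexk i) hm) hmin
      rw [← Ideal.mem_span_singleton]
      rw [← PadicInt.norm_le_pow_iff_mem_span_pow]
      rwa [← inv_pow_eq_zpow]
    calc μ (R c) ≤ μ {x | ∀ i, (p:ℤ_[p])^(k i) ∣ (x i - y0 i)} := measure_mono hsub
      _ ≤ Vol := meas_coset n μ k y0
  -- counting hypotheses
  have hkey : ∀ i, ∀ q ∈ Sf i,
      q.1 ∈ Finset.Icc (-(a0:ℤ)) a0 ∧ q.2 ∈ Finset.Icc (-(b0:ℤ)) b0 ∧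
      ((p^(v i) * Nat.gcd a0 b0 : ℕ) : ℤ) ∣ (q.1 * b0 - q.2 * a0) ∧
      q.1 * b0 - q.2 * a0 ≠ 0 := by
    intro i q hq
    rw [hSfdef] at hq
    simp only [Finset.mem_filter, Finset.mem_product] at hq
    obtain ⟨⟨hbox1, hbox2⟩, hg1, hg2, y, hy1', hy2'⟩ := hq
    have hDne : q.1 * (b0:ℤ) - q.2 * a0 ≠ 0 := by
      intro h0
      have he : q.1 * (b0:ℤ) = q.2 * a0 := by linarith [sub_eq_zero.mp h0]
      have hc1 : IsCoprime q.1 (a0:ℤ) := Int.isCoprime_iff_gcd_eq_one.mpr hg1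
      have hc2 : IsCoprime q.2 (b0:ℤ) := Int.isCoprime_iff_gcd_eq_one.mpr hg2
      have hd1 : (a0:ℤ) ∣ (b0:ℤ) * q.1 := ⟨q.2, by linarith⟩
      have hd2 : (a0:ℤ) ∣ (b0:ℤ) := hc1.symm.dvd_of_dvd_mul_right hd1
      have hd3 : (b0:ℤ) ∣ (a0:ℤ) * q.2 := ⟨q.1, by linarith⟩
      have hd4 : (b0:ℤ) ∣ (a0:ℤ) := hc2.symm.dvd_of_dvd_mul_right hd3
      have : (a0:ℤ) = b0 := Int.dvd_antisymm (by positivity) (by positivity) hd2 hd4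
      exact hab (by exact_mod_cast this)
    have hA : ((a0:ℕ):ℚ_[p]) ≠ 0 := Nat.cast_ne_zero.mpr ha0.ne'
    have hB : ((b0:ℕ):ℚ_[p]) ≠ 0 := Nat.cast_ne_zero.mpr hb0.ne'
    have hdiff : (q.1:ℚ_[p]) / (a0:ℚ_[p]) - (q.2:ℚ_[p]) / (b0:ℚ_[p]) =
        ((q.1 * b0 - q.2 * a0 : ℤ) : ℚ_[p]) / (((a0*b0 : ℕ)) : ℚ_[p]) := by
      field_simp
      push_cast
      ring
    have hnormAB : ‖(((a0*b0 : ℕ)) : ℚ_[p])‖ = 1 := norm_natCast_eq_one (Nat.Coprime.mul ha0p hb0p)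
    have hlt : ‖((q.1 * b0 - q.2 * a0 : ℤ) : ℚ_[p])‖ < max (ψ i a0) (ψ i b0) := by
      have h3 : ‖(q.1:ℚ_[p])/(a0:ℚ_[p]) - (q.2:ℚ_[p])/(b0:ℚ_[p])‖ < max (ψ i a0) (ψ i b0) := by
        have he : (q.1:ℚ_[p])/(a0:ℚ_[p]) - (q.2:ℚ_[p])/(b0:ℚ_[p]) =
            ((y:ℚ_[p]) - (q.2:ℚ_[p])/(b0:ℚ_[p])) + (-((y:ℚ_[p]) - (q.1:ℚ_[p])/(a0:ℚ_[p]))) := by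
          ring
        rw [he]
        refine lt_of_le_of_lt (Padic.nonarchimedean _ _) ?_
        rw [norm_neg]
        exact lt_of_lt_of_le (max_lt_max hy2' hy1') (le_of_eq (max_comm _ _))
      rwa [hdiff, norm_div, hnormAB, div_one] at h3
    have hdvd_pv : ((p:ℤ))^(v i) ∣ (q.1 * b0 - q.2 * a0) :=
      int_dvd_of_norm_lt (fun m hm => Nat.find_min' (hexv i) hm) hlt
    have hgd : ((Nat.gcd a0 b0 : ℕ) : ℤ) ∣ (q.1 * b0 - q.2 * a0) :=
      dvd_sub (Dvd.dvd.mul_left (Int.natCast_dvd_natCast.mpr (Nat.gcd_dvd_right a0 b0)) q.1)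
        (Dvd.dvd.mul_left (Int.natCast_dvd_natCast.mpr (Nat.gcd_dvd_left a0 b0)) q.2)
    have hcopPg : Nat.Coprime (p^(v i)) (Nat.gcd a0 b0) := by
      have h1 : Nat.Coprime (Nat.gcd a0 b0) p :=
        Nat.Coprime.coprime_dvd_left (Nat.gcd_dvd_left a0 b0) ha0p
      exact Nat.Coprime.pow_left _ h1.symm
    have hmul : ((p^(v i) * Nat.gcd a0 b0 : ℕ) : ℤ) ∣ (q.1 * b0 - q.2 * a0) := by
      have hic := Nat.isCoprime_iff_coprime.mpr hcopPg
      push_cast at hic ⊢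
      exact hic.mul_dvd hdvd_pv hgd
    exact ⟨hbox1, hbox2, hmul, hDne⟩
  -- per-coordinate bound in ℝ≥0∞
  have hcoord : ∀ i : Fin n, ((Sf i).card : ℝ≥0∞) * ((p:ℝ≥0∞)^(k i))⁻¹ ≤
      ENNReal.ofReal (30 * ((a0:ℝ) * (b0:ℝ)) * (ψ i a0 * ψ i b0)) := by
    intro i
    have hcount : (Sf i).card * (p^(v i)) ≤ 30 * (a0*b0) :=
      count_lemma ha0 hb0 (pow_pos hpp.pos _) (Sf i) (hkey i)
    have hpkpos : (0:ℝ) < (p:ℝ)^(k i) := pow_pos hp0 _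
    have hpvpos : (0:ℝ) < (p:ℝ)^(v i) := pow_pos hp0 _
    have hcR : ((Sf i).card : ℝ) ≤ 30 * ((a0:ℝ)*(b0:ℝ)) * ((p:ℝ)^(v i))⁻¹ := by
      have hc : ((Sf i).card : ℝ) * (p:ℝ)^(v i) ≤ 30 * ((a0:ℝ)*(b0:ℝ)) := by
        exact_mod_cast hcount
      have hd := (le_div_iff₀ hpvpos).mpr hc
      rwa [div_eq_mul_inv] at hd
    have h1 : ((p:ℝ)^(v i))⁻¹ < max (ψ i a0) (ψ i b0) := Nat.find_spec (hexv i)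
    have h2 : ((p:ℝ)^(k i))⁻¹ < min (ψ i a0) (ψ i b0) := Nat.find_spec (hexk i)
    have hreal : ((Sf i).card : ℝ) * ((p:ℝ)^(k i))⁻¹ ≤
        30 * ((a0:ℝ)*(b0:ℝ)) * (ψ i a0 * ψ i b0) := by
      have hstep : ((Sf i).card : ℝ) * ((p:ℝ)^(k i))⁻¹ ≤
          (30 * ((a0:ℝ)*(b0:ℝ)) * max (ψ i a0) (ψ i b0)) * min (ψ i a0) (ψ i b0) := by
        have e1 : (0:ℝ) ≤ ((p:ℝ)^(k i))⁻¹ := by positivity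
        calc ((Sf i).card : ℝ) * ((p:ℝ)^(k i))⁻¹
            ≤ (30 * ((a0:ℝ)*(b0:ℝ)) * ((p:ℝ)^(v i))⁻¹) * ((p:ℝ)^(k i))⁻¹ :=
              mul_le_mul_of_nonneg_right hcR e1
          _ ≤ (30 * ((a0:ℝ)*(b0:ℝ)) * max (ψ i a0) (ψ i b0)) * min (ψ i a0) (ψ i b0) := by
              have h30 : (0:ℝ) ≤ 30 * ((a0:ℝ)*(b0:ℝ)) := by positivity
              have hmx0 : (0:ℝ) ≤ max (ψ i a0) (ψ i b0) := le_trans (hr i).le (le_max_left _ _)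
              refine mul_le_mul (mul_le_mul_of_nonneg_left h1.le h30) h2.le
                (inv_nonneg.mpr hpkpos.le) (mul_nonneg h30 hmx0)
      calc ((Sf i).card : ℝ) * ((p:ℝ)^(k i))⁻¹
          ≤ (30 * ((a0:ℝ)*(b0:ℝ)) * max (ψ i a0) (ψ i b0)) * min (ψ i a0) (ψ i b0) := hstep
        _ = 30 * ((a0:ℝ)*(b0:ℝ)) * (min (ψ i a0) (ψ i b0) * max (ψ i a0) (ψ i b0)) := by ring
        _ = 30 * ((a0:ℝ)*(b0:ℝ)) * (ψ i a0 * ψ i b0) := by rw [min_mul_max]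
    have hcast : ((Sf i).card : ℝ≥0∞) * ((p:ℝ≥0∞)^(k i))⁻¹ =
        ENNReal.ofReal (((Sf i).card : ℝ) * ((p:ℝ)^(k i))⁻¹) := by
      rw [ENNReal.ofReal_mul (Nat.cast_nonneg _), ENNReal.ofReal_inv_of_pos hpkpos,
        ENNReal.ofReal_pow (Nat.cast_nonneg p), ENNReal.ofReal_natCast,
        ENNReal.ofReal_natCast]
    rw [hcast]
    exact ENNReal.ofReal_le_ofReal hreal
  -- assemble
  calc μ (Aset p n ψ a0 ∩ Aset p n ψ b0)
      ≤ μ (⋃ c ∈ Fintype.piFinset Sf, R c) := measure_mono hcover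
    _ ≤ ∑ c ∈ Fintype.piFinset Sf, μ (R c) := measure_biUnion_finset_le _ _
    _ ≤ ∑ _c ∈ Fintype.piFinset Sf, Vol := Finset.sum_le_sum hRc
    _ = ((Fintype.piFinset Sf).card : ℝ≥0∞) * Vol := by
        rw [Finset.sum_const, nsmul_eq_mul]
    _ = ∏ i, (((Sf i).card : ℝ≥0∞) * ((p:ℝ≥0∞)^(k i))⁻¹) := by
        rw [Fintype.card_piFinset, hVoldef, ENNReal.prod_inv_distrib]
        · push_cast
          rw [← Finset.prod_mul_distrib]
        · exact fun i _ j _ _ => Or.inl (pow_ne_zero _ (by exact_mod_cast hpp.pos.ne'))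
    _ ≤ ∏ i, ENNReal.ofReal (30 * ((a0:ℝ) * (b0:ℝ)) * (ψ i a0 * ψ i b0)) :=
        Finset.prod_le_prod' fun i _ => hcoord i
    _ = ENNReal.ofReal (∏ i, (30 * ((a0:ℝ) * (b0:ℝ)) * (ψ i a0 * ψ i b0))) :=
        (ENNReal.ofReal_prod_of_nonneg fun i _ => by
          have h1 := hr i; have h2 := hs i
          positivity).symm
    _ ≤ (30:ℝ≥0∞)^n * ENNReal.ofReal ((a0:ℝ)^n * (b0:ℝ)^n * ∏ i, ψ i a0 * ψ i b0) := by
        have hprod : (∏ i : Fin n, (30 * ((a0:ℝ) * (b0:ℝ)) * (ψ i a0 * ψ i b0)))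
            = (30:ℝ)^n * ((a0:ℝ)^n * (b0:ℝ)^n * ∏ i, ψ i a0 * ψ i b0) := by
          rw [Finset.prod_mul_distrib, Finset.prod_const, Finset.card_univ, Fintype.card_fin]
          ring
        rw [hprod, ENNReal.ofReal_mul (by positivity),
          ENNReal.ofReal_pow (by norm_num : (0:ℝ) ≤ 30)]
        norm_num
end

section
/- Let p be prime, n ≥ 1, and τ = (τ_1,…,τ_n) with each τ_i > 0. Then the Hausdorff dimension of the set 𝔚_n(τ) of x ∈ ℤ_p^n for which there are infinitely many (a_0,…,a_n) ∈ ℤ^{n+1}, 1 ≤ |a_i| ≤ a_0, with |x_i − a_i/a_0|_p < a_0^{−τ_i} for all i, satisfies dim 𝔚_n(τ) ≤ min_{1 ≤ i ≤ n} (n + 1 + ∑_{j : τ_j < τ_i}(τ_i − τ_j)) / τ_i. -/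
open scoped ENNReal

/-- The weighted simultaneously approximable set `𝔚_n(τ)`: points of `ℤ_p^n` admitting
infinitely many rational approximations `aᵢ/a₀` with `1 ≤ |aᵢ| ≤ a₀` and
`|xᵢ − aᵢ/a₀|_p < a₀^{−τᵢ}` for all `i`. -/
def Wtau (p n : ℕ) [Fact p.Prime] (τ : Fin n → ℝ) : Set (Fin n → ℤ_[p]) :=
  {x | {aa : ℕ × (Fin n → ℤ) | 0 < aa.1 ∧
      (∀ i, 1 ≤ |aa.2 i| ∧ |aa.2 i| ≤ (aa.1 : ℤ)) ∧
      ∀ i, ‖(x i : ℚ_[p]) - (aa.2 i : ℚ_[p]) / (aa.1 : ℚ_[p])‖ <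
        (aa.1 : ℝ) ^ (-(τ i))}.Infinite}

open MeasureTheory Filter Topology

section Aux

variable (p : ℕ) [hp : Fact p.Prime]

/-- smallest power with `p^(-K) < m^(-τ')`. -/
noncomputable def Kexp (τ' : ℝ) (m : ℕ) : ℕ := ⌊τ' * Real.logb p m⌋₊ + 1

lemma one_lt_p : (1:ℝ) < p := by exact_mod_cast hp.out.one_lt

lemma rpow_logb_self {m : ℕ} (hm : 1 ≤ m) (τ' : ℝ) :
    (p:ℝ) ^ (τ' * Real.logb p m) = (m:ℝ) ^ τ' := by
  have hp1 : (1:ℝ) < p := one_lt_p p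
  have hm0 : (0:ℝ) < m := by exact_mod_cast hm
  rw [mul_comm, Real.rpow_mul (by linarith), Real.rpow_logb (by linarith) (by linarith) hm0]

lemma Kexp_lt {τ' : ℝ} {m : ℕ} (hm : 1 ≤ m) :
    (m:ℝ) ^ τ' < (p:ℝ) ^ (Kexp p τ' m : ℕ) := by
  have hp1 : (1:ℝ) < p := one_lt_p p
  rw [← rpow_logb_self p hm τ', ← Real.rpow_natCast]
  apply Real.rpow_lt_rpow_of_exponent_lt hp1
  push_cast [Kexp]
  exact Nat.lt_floor_add_one _

lemma Kexp_le {τ' : ℝ} {m : ℕ} (hm : 1 ≤ m) (hτ' : 0 ≤ τ') :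
    ((p:ℝ) ^ (Kexp p τ' m : ℕ)) ≤ p * (m:ℝ) ^ τ' := by
  have hp1 : (1:ℝ) < p := one_lt_p p
  have hL : 0 ≤ τ' * Real.logb p m :=
    mul_nonneg hτ' (Real.logb_nonneg hp1 (by exact_mod_cast hm))
  have h2 : (p:ℝ) ^ (⌊τ' * Real.logb p m⌋₊ : ℕ) ≤ (p:ℝ) ^ (τ' * Real.logb p m) := by
    rw [← Real.rpow_natCast]
    exact Real.rpow_le_rpow_of_exponent_le hp1.le (Nat.floor_le hL)
  calc (p:ℝ) ^ (Kexp p τ' m : ℕ) = (p:ℝ) ^ (⌊τ' * Real.logb p m⌋₊ : ℕ) * p := pow_succ _ _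
    _ ≤ (p:ℝ) ^ (τ' * Real.logb p m) * p := mul_le_mul_of_nonneg_right h2 (by linarith)
    _ = p * (m:ℝ) ^ τ' := by rw [rpow_logb_self p hm τ', mul_comm]

lemma Kexp_mono {τ₁ τ₂ : ℝ} {m : ℕ} (hm : 1 ≤ m) (h : τ₁ ≤ τ₂) :
    Kexp p τ₁ m ≤ Kexp p τ₂ m := by
  have hL : 0 ≤ Real.logb p m := Real.logb_nonneg (one_lt_p p) (by exact_mod_cast hm)
  exact Nat.add_le_add_right (Nat.floor_mono (mul_le_mul_of_nonneg_right h hL)) 1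

lemma rpow_neg_le_zpow {τ' : ℝ} {m : ℕ} (hm : 1 ≤ m) (hτ' : 0 ≤ τ') :
    (m:ℝ) ^ (-τ') ≤ (p:ℝ) ^ (-(Kexp p τ' m : ℤ) + 1) := by
  have hp1 : (1:ℝ) < p := one_lt_p p
  have hm0 : (0:ℝ) < m := by exact_mod_cast hm
  have hmpos : (0:ℝ) < (m:ℝ) ^ τ' := Real.rpow_pos_of_pos hm0 _
  have hKpos : (0:ℝ) < (p:ℝ) ^ (Kexp p τ' m : ℕ) := by positivity
  have h1 := Kexp_le p hm hτ'
  have he : (p:ℝ) ^ (-(Kexp p τ' m : ℤ) + 1) = p / (p:ℝ) ^ (Kexp p τ' m : ℕ) := by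
    rw [zpow_add₀ (by linarith : (p:ℝ) ≠ 0), zpow_neg, zpow_natCast, zpow_one]
    ring
  rw [he, Real.rpow_neg hm0.le, le_div_iff₀ hKpos, inv_mul_eq_div, div_le_iff₀ hmpos]
  linarith

lemma zpow_lt_rpow_neg {τ' : ℝ} {m : ℕ} (hm : 1 ≤ m) :
    (p:ℝ) ^ (-(Kexp p τ' m : ℤ)) < (m:ℝ) ^ (-τ') := by
  have hp1 : (1:ℝ) < p := one_lt_p p
  have hm0 : (0:ℝ) < m := by exact_mod_cast hm
  have h1 := Kexp_lt p (τ' := τ') (m := m) hm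
  have hmpos : (0:ℝ) < (m:ℝ) ^ τ' := Real.rpow_pos_of_pos hm0 _
  rw [Real.rpow_neg hm0.le, zpow_neg, zpow_natCast]
  exact inv_strictAnti₀ hmpos h1

lemma norm_le_of_norm_lt {τ' : ℝ} {m : ℕ} (hm : 1 ≤ m) (hτ' : 0 ≤ τ') {z : ℤ_[p]}
    (h : ‖z‖ < (m:ℝ) ^ (-τ')) : ‖z‖ ≤ (p:ℝ) ^ (-(Kexp p τ' m : ℤ)) := by
  rw [PadicInt.norm_le_pow_iff_norm_lt_pow_add_one]
  exact h.trans_le (rpow_neg_le_zpow p hm hτ')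

/-- A piece of the natural cover. -/
def piece (p n : ℕ) [Fact p.Prime] (τ : Fin n → ℝ) (i : Fin n) (m : ℕ) (a : Fin n → ℤ)
    (v : Fin n → ℕ) : Set (Fin n → ℤ_[p]) :=
  {x | (∀ j, 1 ≤ |a j| ∧ |a j| ≤ (m:ℤ)) ∧ (∀ j, v j < p ^ Kexp p (τ i) m) ∧
       (∀ j, ‖(x j : ℚ_[p]) - (a j : ℚ_[p]) / (m : ℚ_[p])‖ < (m:ℝ) ^ (-τ j)) ∧
       (∀ j, ‖x j - ((v j : ℕ) : ℤ_[p])‖ ≤ (p:ℝ) ^ (-(Kexp p (τ i) m : ℤ)))}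

lemma norm_sub_le_max (a b : ℤ_[p]) : ‖a - b‖ ≤ max ‖a‖ ‖b‖ := by
  rw [sub_eq_add_neg]
  exact (PadicInt.nonarchimedean a (-b)).trans (by rw [norm_neg])

variable {n : ℕ} {τ : Fin n → ℝ} {i : Fin n} {m : ℕ} {a : Fin n → ℤ} {v : Fin n → ℕ}

lemma piece_diam_le :
    EMetric.diam (piece p n τ i m a v) ≤
      ENNReal.ofReal ((p:ℝ) ^ (-(Kexp p (τ i) m : ℤ))) := by
  have hr : (0:ℝ) ≤ (p:ℝ) ^ (-(Kexp p (τ i) m : ℤ)) := by positivity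
  refine EMetric.diam_le fun x hx y hy => ?_
  rw [edist_le_ofReal hr]
  rw [dist_pi_le_iff hr]
  intro j
  have h1 := hx.2.2.2 j
  have h2 := hy.2.2.2 j
  rw [dist_eq_norm]
  have : x j - y j = (x j - (v j : ℤ_[p])) - (y j - (v j : ℤ_[p])) := by ring
  rw [this]
  exact (norm_sub_le_max p _ _).trans (max_le h1 h2)

lemma piece_empty_of_invalid (ha : ¬ ∀ j, 1 ≤ |a j| ∧ |a j| ≤ (m:ℤ)) :
    piece p n τ i m a v = ∅ := by
  ext x; simp only [piece, Set.mem_setOf_eq, Set.mem_empty_iff_false, iff_false]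
  rintro ⟨h, -⟩; exact ha h

lemma piece_subset_ball (hm : 1 ≤ m) (hτ : ∀ j, 0 < τ j) {w : Fin n → ℕ} {x : Fin n → ℤ_[p]}
    (hx : x ∈ piece p n τ i m a v) {y : Fin n → ℤ_[p]} (hy : y ∈ piece p n τ i m a w)
    (j : Fin n) : ‖x j - y j‖ ≤ (p:ℝ) ^ (-(Kexp p (τ j) m : ℤ)) := by
  have h1 := hx.2.2.1 j
  have h2 := hy.2.2.1 j
  have key : ‖(((x j - y j : ℤ_[p])) : ℚ_[p])‖ < (m:ℝ) ^ (-τ j) := by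
    push_cast
    have : ((x j : ℚ_[p])) - y j =
        ((x j : ℚ_[p]) - (a j : ℚ_[p]) / (m : ℚ_[p])) -
          ((y j : ℚ_[p]) - (a j : ℚ_[p]) / (m : ℚ_[p])) := by ring
    rw [this, sub_eq_add_neg]
    calc ‖_ + _‖ ≤ max ‖(x j : ℚ_[p]) - (a j : ℚ_[p]) / (m : ℚ_[p])‖
          ‖-((y j : ℚ_[p]) - (a j : ℚ_[p]) / (m : ℚ_[p]))‖ := Padic.nonarchimedean _ _
      _ = max ‖(x j : ℚ_[p]) - (a j : ℚ_[p]) / (m : ℚ_[p])‖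
          ‖(y j : ℚ_[p]) - (a j : ℚ_[p]) / (m : ℚ_[p])‖ := by rw [norm_neg]
      _ < (m:ℝ) ^ (-τ j) := max_lt h1 h2
  exact norm_le_of_norm_lt p hm (hτ j).le (by rwa [PadicInt.norm_def])

lemma Wtau_subset_iUnion (N : ℕ) :
    Wtau p n τ ⊆ ⋃ kav : ℕ × ((Fin n → ℤ) × (Fin n → ℕ)),
      piece p n τ i (kav.1 + N) kav.2.1 kav.2.2 := by
  intro x hx
  set S := {aa : ℕ × (Fin n → ℤ) | 0 < aa.1 ∧
      (∀ i, 1 ≤ |aa.2 i| ∧ |aa.2 i| ≤ (aa.1 : ℤ)) ∧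
      ∀ i, ‖(x i : ℚ_[p]) - (aa.2 i : ℚ_[p]) / (aa.1 : ℚ_[p])‖ <
        (aa.1 : ℝ) ^ (-(τ i))} with hS
  have hfin : (S ∩ {aa | aa.1 < N}).Finite := by
    have : (S ∩ {aa | aa.1 < N}) ⊆
        (Set.Iio N) ×ˢ (Set.pi Set.univ fun _ : Fin n => Set.Icc (-(N:ℤ)) N) := by
      rintro ⟨a0, a⟩ ⟨haS, haN⟩
      refine ⟨haN, fun j _ => ?_⟩
      have h := haS.2.1 j
      have : |a j| ≤ (N:ℤ) := h.2.trans (by exact_mod_cast haN.le)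
      exact abs_le.1 this
    exact Set.Finite.subset ((Set.finite_Iio _).prod
      (Set.Finite.pi fun _ => Set.finite_Icc _ _)) this
  obtain ⟨⟨m, a⟩, haS, haN⟩ := ((hx.diff hfin).nonempty)
  simp only [Set.mem_diff, Set.mem_inter_iff, Set.mem_setOf_eq, not_and, not_lt] at haN
  have hmN : N ≤ m := haN haS
  obtain ⟨hm0, hab, hnorm⟩ := haS
  set Ki := Kexp p (τ i) m with hKi
  refine Set.mem_iUnion.2 ⟨⟨m - N, a, fun j => (x j).appr Ki⟩, ?_⟩
  have hmm : m - N + N = m := Nat.sub_add_cancel hmN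
  rw [hmm]
  refine ⟨hab, fun j => PadicInt.appr_lt _ _, hnorm, fun j => ?_⟩
  rw [PadicInt.norm_le_pow_iff_mem_span_pow]
  exact PadicInt.appr_spec Ki (x j)

lemma card_filter_mod (c M r : ℕ) (hc : 0 < c) :
    ((Finset.range (c * M)).filter (fun u => u % c = r)).card ≤ M := by
  refine (Finset.card_le_card_of_injOn (fun u => u / c) (fun u hu => ?_) ?_).trans
    (le_of_eq (Finset.card_range M))
  · simp only [Finset.mem_coe, Finset.mem_filter, Finset.mem_range] at hu ⊢
    exact Nat.div_lt_of_lt_mul hu.1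
  · intro u hu w hw h
    simp only [Finset.coe_filter, Finset.mem_range, Set.mem_setOf_eq] at hu hw
    simp only at h
    have key : c * (u / c) + u % c = c * (w / c) + w % c := by rw [h, hu.2, hw.2]
    rwa [Nat.div_add_mod, Nat.div_add_mod] at key

lemma piece_support (hm : 1 ≤ m) (hτ : ∀ j, 0 < τ j) (a : Fin n → ℤ) :
    ∃ F : Finset (Fin n → ℕ), (∀ v, v ∉ F → piece p n τ i m a v = ∅) ∧
      F.card ≤ ∏ j, p ^ (Kexp p (τ i) m - Kexp p (τ j) m) := by
  classical
  set Ki := Kexp p (τ i) m with hKi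
  set Kj := fun j => Kexp p (τ j) m with hKj
  set e := fun j => min Ki (Kj j) with he
  have hsub : ∀ j, Ki - e j = Ki - Kj j := by
    intro j
    rcases le_total Ki (Kj j) with h | h
    · rw [he]; simp only [min_eq_left h]; omega
    · rw [he]; simp only [min_eq_right h]
  by_cases hne : ∃ v₀, (piece p n τ i m a v₀).Nonempty
  · obtain ⟨v₀, x₀, hx₀⟩ := hne
    refine ⟨Fintype.piFinset fun j => (Finset.range (p ^ Ki)).filter
        (fun u => u % p ^ (e j) = v₀ j % p ^ (e j)), fun v hv => ?_, ?_⟩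
    · by_contra hemp
      obtain ⟨x, hx⟩ := Set.nonempty_iff_ne_empty.2 hemp
      refine hv (Fintype.mem_piFinset.2 fun j => ?_)
      refine Finset.mem_filter.2 ⟨Finset.mem_range.2 (hx.2.1 j), ?_⟩
      have hp1 : (1:ℝ) < p := one_lt_p p
      have hej1 : (-(Ki:ℤ)) ≤ -(e j : ℤ) := by
        simp only [neg_le_neg_iff, Int.ofNat_le]; exact min_le_left _ _
      have hej2 : (-(Kj j :ℤ)) ≤ -(e j : ℤ) := by
        simp only [neg_le_neg_iff, Int.ofNat_le]; exact min_le_right _ _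
      have hmono := fun (k l : ℤ) (h : k ≤ l) => zpow_le_zpow_right₀ hp1.le h
      have h1 : ‖x j - ((v j : ℕ) : ℤ_[p])‖ ≤ (p:ℝ) ^ (-(e j:ℤ)) :=
        (hx.2.2.2 j).trans (hmono _ _ hej1)
      have h2 : ‖x₀ j - ((v₀ j : ℕ) : ℤ_[p])‖ ≤ (p:ℝ) ^ (-(e j:ℤ)) :=
        (hx₀.2.2.2 j).trans (hmono _ _ hej1)
      have h3 : ‖x j - x₀ j‖ ≤ (p:ℝ) ^ (-(e j:ℤ)) :=
        (piece_subset_ball p hm hτ hx hx₀ j).trans (hmono _ _ hej2)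
      have hkey : ‖((v j : ℕ) : ℤ_[p]) - ((v₀ j : ℕ) : ℤ_[p])‖ ≤ (p:ℝ) ^ (-(e j:ℤ)) := by
        have hdecomp : ((v j : ℕ) : ℤ_[p]) - ((v₀ j : ℕ) : ℤ_[p]) =
            (-(x j - ((v j : ℕ) : ℤ_[p]))) + ((x j - x₀ j) + (x₀ j - ((v₀ j : ℕ) : ℤ_[p]))) := by
          ring
        rw [hdecomp]
        refine (PadicInt.nonarchimedean _ _).trans (max_le (by rwa [norm_neg]) ?_)
        exact (PadicInt.nonarchimedean _ _).trans (max_le h3 h2)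
      have hdvd : ((p:ℤ) ^ (e j)) ∣ ((v j : ℤ) - (v₀ j : ℤ)) := by
        rw [← PadicInt.norm_int_le_pow_iff_dvd]
        push_cast
        exact hkey
      have hmod : v₀ j ≡ v j [MOD p ^ (e j)] :=
        (Nat.modEq_iff_dvd).2 (by exact_mod_cast hdvd)
      exact hmod.symm
    · rw [Fintype.card_piFinset]
      refine Finset.prod_le_prod' fun j _ => ?_
      have hce : p ^ Ki = p ^ (e j) * p ^ (Ki - e j) := by
        rw [← pow_add, Nat.add_sub_cancel' (min_le_left _ _)]
      rw [hce, hsub j] at *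
      exact (hsub j) ▸ card_filter_mod _ _ _ (pow_pos hp.out.pos _)
  · push_neg at hne
    exact ⟨∅, fun v _ => hne v, by simp⟩

lemma tsum_v_le (hm : 1 ≤ m) (hτ : ∀ j, 0 < τ j) {s : ℝ} (hs : 0 < s) (a : Fin n → ℤ) :
    ∑' v : Fin n → ℕ, EMetric.diam (piece p n τ i m a v) ^ s ≤
      ((∏ j, p ^ (Kexp p (τ i) m - Kexp p (τ j) m) : ℕ) : ℝ≥0∞) *
        ENNReal.ofReal ((p:ℝ) ^ (-(Kexp p (τ i) m : ℤ))) ^ s := by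
  obtain ⟨F, hF, hcard⟩ := piece_support p hm hτ a
  rw [tsum_eq_sum (s := F) (fun v hv => by
    rw [hF v hv, EMetric.diam, EMetric.diam_empty, ENNReal.zero_rpow_of_pos hs])]
  calc ∑ v ∈ F, EMetric.diam (piece p n τ i m a v) ^ s
      ≤ ∑ _v ∈ F, ENNReal.ofReal ((p:ℝ) ^ (-(Kexp p (τ i) m : ℤ))) ^ s :=
        Finset.sum_le_sum fun v _ => ENNReal.rpow_le_rpow (piece_diam_le p) hs.le
    _ = (F.card : ℝ≥0∞) * ENNReal.ofReal ((p:ℝ) ^ (-(Kexp p (τ i) m : ℤ))) ^ s := by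
        rw [Finset.sum_const, nsmul_eq_mul]
    _ ≤ _ := mul_le_mul_left (by exact_mod_cast hcard) _

lemma tsum_av_le (hm : 1 ≤ m) (hτ : ∀ j, 0 < τ j) {s : ℝ} (hs : 0 < s) :
    ∑' av : (Fin n → ℤ) × (Fin n → ℕ), EMetric.diam (piece p n τ i m av.1 av.2) ^ s ≤
      (((2*m+1)^n : ℕ) : ℝ≥0∞) *
        (((∏ j, p ^ (Kexp p (τ i) m - Kexp p (τ j) m) : ℕ) : ℝ≥0∞) *
          ENNReal.ofReal ((p:ℝ) ^ (-(Kexp p (τ i) m : ℤ))) ^ s) := by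
  classical
  rw [ENNReal.tsum_prod (f := fun a v => EMetric.diam (piece p n τ i m a v) ^ s)]
  set A : Finset (Fin n → ℤ) := Fintype.piFinset fun _ => Finset.Icc (-(m:ℤ)) (m:ℤ) with hA
  have hAcard : A.card = (2*m+1)^n := by
    rw [hA, Fintype.card_piFinset]
    have : (Finset.Icc (-(m:ℤ)) (m:ℤ)).card = 2*m+1 := by
      rw [Int.card_Icc]
      omega
    simp [this]
  rw [tsum_eq_sum (s := A) (fun b hb => by
    have : ∀ v, piece p n τ i m b v = ∅ := by
      intro v
      refine piece_empty_of_invalid p fun hval => hb (Fintype.mem_piFinset.2 fun j => ?_)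
      rw [Finset.mem_Icc]
      have := (hval j).2
      rw [abs_le] at this
      exact this
    simp [this, EMetric.diam, EMetric.diam_empty, ENNReal.zero_rpow_of_pos hs])]
  calc ∑ b ∈ A, ∑' v : Fin n → ℕ, EMetric.diam (piece p n τ i m b v) ^ s
      ≤ ∑ _b ∈ A, (((∏ j, p ^ (Kexp p (τ i) m - Kexp p (τ j) m) : ℕ) : ℝ≥0∞) *
          ENNReal.ofReal ((p:ℝ) ^ (-(Kexp p (τ i) m : ℤ))) ^ s) :=
        Finset.sum_le_sum fun b _ => tsum_v_le p hm hτ hs b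
    _ = _ := by rw [Finset.sum_const, nsmul_eq_mul, hAcard]

lemma prod_rpow_sum (x : ℝ) (hx : 0 < x) (f : Fin n → ℝ) :
    ∏ j, x ^ f j = x ^ (∑ j, f j) := by
  classical
  induction (Finset.univ : Finset (Fin n)) using Finset.induction_on with
  | empty => simp
  | insert _ _ h ih => rw [Finset.prod_insert h, Finset.sum_insert h, ih, Real.rpow_add hx]

lemma real_bound (hm : 1 ≤ m) (hτ : ∀ j, 0 < τ j) {s : ℝ} (hs : 0 ≤ s) :
    (((2*m+1)^n : ℕ) : ℝ) * ((∏ j, p ^ (Kexp p (τ i) m - Kexp p (τ j) m) : ℕ) : ℝ) *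
      ((p:ℝ) ^ (-(Kexp p (τ i) m : ℤ))) ^ s ≤
    (3:ℝ)^n * (p:ℝ)^n *
      (m:ℝ) ^ ((n:ℝ) + (∑ j, if τ j < τ i then τ i - τ j else 0) - τ i * s) := by
  have hp1 : (1:ℝ) < p := one_lt_p p
  have hm0 : (0:ℝ) < m := by exact_mod_cast hm
  -- part 1
  have P1 : (((2*m+1)^n : ℕ) : ℝ) ≤ 3^n * (m:ℝ)^(n:ℕ) := by
    push_cast
    rw [← mul_pow]
    refine pow_le_pow_left₀ (by positivity) ?_ n
    have h1 : (1:ℝ) ≤ (m:ℝ) := by exact_mod_cast hm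
    push_cast; linarith
  -- part 2
  have P2 : ((∏ j, p ^ (Kexp p (τ i) m - Kexp p (τ j) m) : ℕ) : ℝ) ≤
      (p:ℝ)^n * (m:ℝ) ^ (∑ j, if τ j < τ i then τ i - τ j else 0) := by
    push_cast
    calc (∏ j, (p:ℝ) ^ (Kexp p (τ i) m - Kexp p (τ j) m : ℕ))
        ≤ ∏ j, ((p:ℝ) * (m:ℝ) ^ (if τ j < τ i then τ i - τ j else 0)) := by
          refine Finset.prod_le_prod (fun j _ => by positivity) fun j _ => ?_
          by_cases hij : τ j < τ i
          · rw [if_pos hij]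
            have hKle : Kexp p (τ j) m ≤ Kexp p (τ i) m := Kexp_mono p hm hij.le
            rw [pow_sub₀ _ (by positivity) hKle]
            have hd1 : (p:ℝ) ^ (Kexp p (τ i) m) ≤ p * (m:ℝ) ^ (τ i) :=
              Kexp_le p hm (hτ i).le
            have hd2 : (m:ℝ) ^ (τ j) ≤ (p:ℝ) ^ (Kexp p (τ j) m) := (Kexp_lt p hm).le
            calc (p:ℝ) ^ (Kexp p (τ i) m) / (p:ℝ) ^ (Kexp p (τ j) m)
                ≤ (p * (m:ℝ) ^ (τ i)) / (m:ℝ) ^ (τ j) := by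
                  apply div_le_div₀ (by positivity) hd1 (by positivity) hd2
              _ = p * (m:ℝ) ^ (τ i - τ j) := by
                  rw [Real.rpow_sub hm0]; ring
          · rw [if_neg hij]
            have hKle : Kexp p (τ i) m ≤ Kexp p (τ j) m :=
              Kexp_mono p hm (not_lt.1 hij)
            rw [Nat.sub_eq_zero_of_le hKle, pow_zero, Real.rpow_zero, mul_one]
            linarith
      _ = (p:ℝ)^n * (m:ℝ) ^ (∑ j, if τ j < τ i then τ i - τ j else 0) := by
          rw [Finset.prod_mul_distrib, Finset.prod_const, Finset.card_univ,
            Fintype.card_fin, prod_rpow_sum (m:ℝ) hm0]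
  -- part 3
  have P3 : ((p:ℝ) ^ (-(Kexp p (τ i) m : ℤ))) ^ s ≤ (m:ℝ) ^ (-(τ i * s)) := by
    rw [← neg_mul, Real.rpow_mul hm0.le]
    exact Real.rpow_le_rpow (by positivity) (zpow_lt_rpow_neg p hm).le hs
  calc (((2*m+1)^n : ℕ) : ℝ) * ((∏ j, p ^ (Kexp p (τ i) m - Kexp p (τ j) m) : ℕ) : ℝ) *
        ((p:ℝ) ^ (-(Kexp p (τ i) m : ℤ))) ^ s
      ≤ (3^n * (m:ℝ)^(n:ℕ)) * ((p:ℝ)^n * (m:ℝ) ^ (∑ j, if τ j < τ i then τ i - τ j else 0)) *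
        (m:ℝ) ^ (-(τ i * s)) := by
        have h1 : (0:ℝ) ≤ ((∏ j, p ^ (Kexp p (τ i) m - Kexp p (τ j) m) : ℕ) : ℝ) := by positivity
        have h2 : (0:ℝ) ≤ ((p:ℝ) ^ (-(Kexp p (τ i) m : ℤ))) ^ s := by positivity
        gcongr <;> positivity
    _ = (3:ℝ)^n * (p:ℝ)^n *
        (m:ℝ) ^ ((n:ℝ) + (∑ j, if τ j < τ i then τ i - τ j else 0) - τ i * s) := by
        have k1 : ∀ a c : ℝ, (m:ℝ) ^ (a - c) = (m:ℝ) ^ a * (m:ℝ) ^ (-c) := by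
          intro a c; rw [sub_eq_add_neg, Real.rpow_add hm0]
        have k2 : ∀ a b : ℝ, (m:ℝ) ^ (a + b) = (m:ℝ) ^ a * (m:ℝ) ^ b := fun a b =>
          Real.rpow_add hm0 a b
        rw [k1, k2, ← Real.rpow_natCast (m:ℝ) n]
        ring

lemma tsum_av_le' (hm : 1 ≤ m) (hτ : ∀ j, 0 < τ j) {s : ℝ} (hs : 0 < s) :
    ∑' av : (Fin n → ℤ) × (Fin n → ℕ), EMetric.diam (piece p n τ i m av.1 av.2) ^ s ≤
      ENNReal.ofReal ((3:ℝ)^n * (p:ℝ)^n *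
        (m:ℝ) ^ ((n:ℝ) + (∑ j, if τ j < τ i then τ i - τ j else 0) - τ i * s)) := by
  refine (tsum_av_le p hm hτ hs).trans ?_
  have hx : (0:ℝ) < (p:ℝ) ^ (-(Kexp p (τ i) m : ℤ)) :=
    zpow_pos (by exact_mod_cast hp.out.pos) _
  have hA : (0:ℝ) ≤ (((2*m+1)^n : ℕ) : ℝ) := Nat.cast_nonneg _
  have hB : (0:ℝ) ≤ ((∏ j, p ^ (Kexp p (τ i) m - Kexp p (τ j) m) : ℕ) : ℝ) := Nat.cast_nonneg _
  rw [ENNReal.ofReal_rpow_of_pos hx, ← ENNReal.ofReal_natCast ((2*m+1)^n),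
    ← ENNReal.ofReal_natCast (∏ j, p ^ (Kexp p (τ i) m - Kexp p (τ j) m)),
    ← ENNReal.ofReal_mul hB, ← ENNReal.ofReal_mul hA]
  refine ENNReal.ofReal_le_ofReal ?_
  rw [← mul_assoc]
  exact real_bound p hm hτ hs.le

noncomputable instance padicMS : MeasurableSpace ℤ_[p] := borel _
instance padicBS : BorelSpace ℤ_[p] := ⟨rfl⟩

set_option maxHeartbeats 2000000 in
lemma measure_zero (hτ : ∀ j, 0 < τ j) (i : Fin n) {s : ℝ} (hs0 : 0 < s)
    (hs : (n:ℝ) + 1 + (∑ j, if τ j < τ i then τ i - τ j else 0) < τ i * s) :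
    μH[s] (Wtau p n τ) = 0 := by
  classical
  set G : ℕ → ℝ≥0∞ := fun m => ENNReal.ofReal ((3:ℝ)^n * (p:ℝ)^n *
    (m:ℝ) ^ ((n:ℝ) + (∑ j, if τ j < τ i then τ i - τ j else 0) - τ i * s)) with hG
  have hE1 : (n:ℝ) + (∑ j, if τ j < τ i then τ i - τ j else 0) - τ i * s < -1 := by linarith
  have hGsum : ∑' m, G m ≠ ∞ := by
    have hsumm : Summable (fun m : ℕ => ((3:ℝ)^n * (p:ℝ)^n) *
        (m:ℝ) ^ ((n:ℝ) + (∑ j, if τ j < τ i then τ i - τ j else 0) - τ i * s)) :=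
      (Real.summable_nat_rpow.2 hE1).mul_left _
    rw [hG, ← ENNReal.ofReal_tsum_of_nonneg (fun m => by positivity) hsumm]
    exact ENNReal.ofReal_ne_top
  have key : μH[s] (Wtau p n τ) ≤
      liminf (fun N : ℕ => ∑' kav : ℕ × ((Fin n → ℤ) × (Fin n → ℕ)),
        EMetric.diam (piece p n τ i (kav.1 + (N+2)) kav.2.1 kav.2.2) ^ s) atTop := by
    refine MeasureTheory.Measure.hausdorffMeasure_le_liminf_tsum
      (ι := fun _ : ℕ => ℕ × ((Fin n → ℤ) × (Fin n → ℕ))) s (Wtau p n τ) (l := atTop)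
      (fun N : ℕ => ENNReal.ofReal (((N:ℝ)+2) ^ (-τ i)))
      ?_ (fun N kav => piece p n τ i (kav.1 + (N+2)) kav.2.1 kav.2.2) ?_ ?_
    · have h2 : Tendsto (fun N : ℕ => ((N:ℝ)+2)) atTop atTop :=
        tendsto_atTop_add_const_right atTop 2 tendsto_natCast_atTop_atTop
      have h3 := (tendsto_rpow_neg_atTop (hτ i)).comp h2
      have h0 := ENNReal.tendsto_ofReal (a := 0) h3
      simpa using h0
    · refine Eventually.of_forall fun N kav => ?_
      refine (piece_diam_le p).trans (ENNReal.ofReal_le_ofReal ?_)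
      have hm1 : 1 ≤ kav.1 + (N+2) := by omega
      refine (zpow_lt_rpow_neg p hm1).le.trans ?_
      refine Real.rpow_le_rpow_of_nonpos (by positivity) ?_
        (by linarith [hτ i])
      push_cast; linarith
    · exact Eventually.of_forall fun N => Wtau_subset_iUnion p (N+2)
  rw [← le_zero_iff]
  refine key.trans ?_
  have hbound : ∀ N : ℕ, (∑' kav : ℕ × ((Fin n → ℤ) × (Fin n → ℕ)),
      EMetric.diam (piece p n τ i (kav.1 + (N+2)) kav.2.1 kav.2.2) ^ s) ≤
      ∑' k : ℕ, G (k + (N+2)) := by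
    intro N
    rw [ENNReal.tsum_prod
      (f := fun (k:ℕ) (av : (Fin n → ℤ) × (Fin n → ℕ)) => EMetric.diam (piece p n τ i (k + (N+2)) av.1 av.2) ^ s)]
    refine ENNReal.tsum_le_tsum fun k => ?_
    have hm1 : 1 ≤ k + (N + 2) := by omega
    exact tsum_av_le' p hm1 hτ hs0
  calc liminf (fun N : ℕ => ∑' kav : ℕ × ((Fin n → ℤ) × (Fin n → ℕ)),
        EMetric.diam (piece p n τ i (kav.1 + (N+2)) kav.2.1 kav.2.2) ^ s) atTop
      ≤ liminf (fun N : ℕ => ∑' k : ℕ, G (k + (N+2))) atTop :=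
        liminf_le_liminf (Eventually.of_forall hbound)
    _ = 0 := by
        have h1 : Tendsto (fun N : ℕ => ∑' k : ℕ, G (k + (N+2))) atTop (𝓝 0) :=
          (ENNReal.tendsto_sum_nat_add G hGsum).comp (tendsto_add_atTop_nat 2)
        exact h1.liminf_eq


end Aux

/-- upper bound of the weighted p-adic Jarník–Besicovitch theorem.
For positive exponents `τ`, the Hausdorff dimension of `𝔚_n(τ)` is at most
`min_i (n + 1 + ∑_{j : τⱼ < τᵢ} (τᵢ − τⱼ)) / τᵢ`. -/
theorem stmt_8 (p n : ℕ) [Fact p.Prime] (hn : 1 ≤ n)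
    (τ : Fin n → ℝ) (hτ : ∀ i, 0 < τ i) :
    dimH (Wtau p n τ) ≤
      ⨅ i : Fin n, ENNReal.ofReal
        (((n : ℝ) + 1 + ∑ j, if τ j < τ i then τ i - τ j else 0) / τ i) := by
  refine dimH_le fun d' hd' => ?_
  by_contra hlt
  rw [not_le] at hlt
  obtain ⟨i, hi⟩ := iInf_lt_iff.1 hlt
  have hσ0 : 0 ≤ ∑ j, if τ j < τ i then τ i - τ j else 0 :=
    Finset.sum_nonneg fun j _ => by
      split_ifs with h
      · linarith
      · exact le_refl 0
  have hn1 : (1:ℝ) ≤ (n:ℝ) := by exact_mod_cast hn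
  have hbpos : 0 < ((n : ℝ) + 1 + ∑ j, if τ j < τ i then τ i - τ j else 0) / τ i :=
    div_pos (by linarith) (hτ i)
  have hb' : ((n : ℝ) + 1 + ∑ j, if τ j < τ i then τ i - τ j else 0) / τ i < (d' : ℝ) := by
    rw [← ENNReal.ofReal_coe_nnreal] at hi
    exact (ENNReal.ofReal_lt_ofReal_iff_of_nonneg hbpos.le).1 hi
  have hs0 : (0:ℝ) < (d' : ℝ) := lt_trans hbpos hb'
  have hineq : (n:ℝ) + 1 + (∑ j, if τ j < τ i then τ i - τ j else 0) < τ i * (d' : ℝ) := by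
    rw [div_lt_iff₀ (hτ i)] at hb'
    linarith
  have hmain : μH[(d' : ℝ)] (Wtau p n τ) = 0 := measure_zero p hτ i hs0 hineq
  rw [hd'] at hmain
  exact ENNReal.top_ne_zero hmain
end
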